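/- arXiv:2009.11636 — 4 statements merged into one kernel-verified Lean document; each statement's English description precedes it below -/
import Mathlib

section
/- There exists a constant C > 0, independent of B̄ and f, such that for every constant vector B̄ = (B̄₁,B̄₂,B̄₃) ∈ ℝ³ with B̄₃ ≠ 0 and every C¹ function f : ℝ³ → ℝ that is 1-periodic in x₁ and x₂, one has ∫_{(0,1)²} |f(x₁,x₂,0)|² dx₁ dx₂ ≤ C ( B̄₃^{−2} ∫_{(0,1)²×(−1,0)} |B̄·∇f(x)|² dx + ∫_{(0,1)²×(−1,0)} |f(x)|² dx ). (This is the Poincaré-type trace inequality |f|₀² ≲ B̄₃^{−2}‖(B̄·∇)f‖₀² + ‖f‖₀² on the horizontally periodic slab Ω₋ with boundary trace taken on Σ.) -/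
open MeasureTheory

noncomputable section

/-- The lower slab `𝕋² × (-1,0)`, realized as `(0,1)² × (-1,0) ⊆ ℝ³`. -/
def slabNeg : Set (Fin 3 → ℝ) :=
  {x | x 0 ∈ Set.Ioo (0:ℝ) 1 ∧ x 1 ∈ Set.Ioo (0:ℝ) 1 ∧ x 2 ∈ Set.Ioo (-1:ℝ) 0}

/-- The upper slab `𝕋² × (0,1)`. -/
def slabPos : Set (Fin 3 → ℝ) :=
  {x | x 0 ∈ Set.Ioo (0:ℝ) 1 ∧ x 1 ∈ Set.Ioo (0:ℝ) 1 ∧ x 2 ∈ Set.Ioo (0:ℝ) 1}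

/-- The full slab `𝕋² × (-1,1)`. -/
def slabFull : Set (Fin 3 → ℝ) :=
  {x | x 0 ∈ Set.Ioo (0:ℝ) 1 ∧ x 1 ∈ Set.Ioo (0:ℝ) 1 ∧ x 2 ∈ Set.Ioo (-1:ℝ) 1}

/-- `1`-periodicity in the two horizontal variables. -/
def HPeriodic (f : (Fin 3 → ℝ) → ℝ) : Prop :=
  ∀ x, f (x + Pi.single 0 1) = f x ∧ f (x + Pi.single 1 1) = f x

/-- Partial derivative in direction `i`. -/
def pd (i : Fin 3) (f : (Fin 3 → ℝ) → ℝ) : (Fin 3 → ℝ) → ℝ :=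
  fun x => fderiv ℝ f x (Pi.single i 1)

/-- Iterated partial derivative `∂₁^a ∂₂^b ∂₃^c f`. -/
def pdIter (a b c : ℕ) (f : (Fin 3 → ℝ) → ℝ) : (Fin 3 → ℝ) → ℝ :=
  (pd 0)^[a] ((pd 1)^[b] ((pd 2)^[c] f))

/-- The square of the `H^k` Sobolev norm on the set `S`. -/
def sobSq (k : ℕ) (S : Set (Fin 3 → ℝ)) (f : (Fin 3 → ℝ) → ℝ) : ℝ :=
  ∑ a ∈ Finset.range (k+1), ∑ b ∈ Finset.range (k+1), ∑ c ∈ Finset.range (k+1),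
    if a + b + c ≤ k then ∫ x in S, (pdIter a b c f x)^2 else 0

/-- The square of the anisotropic Sobolev norm `‖f‖_{m,ℓ}²`. -/
def sobAnisoSq (m ℓ : ℕ) (S : Set (Fin 3 → ℝ)) (f : (Fin 3 → ℝ) → ℝ) : ℝ :=
  ∑ a ∈ Finset.range (ℓ+1), ∑ b ∈ Finset.range (ℓ+1),
    if a + b ≤ ℓ then sobSq m S ((pd 0)^[a] ((pd 1)^[b] f)) else 0

/-- Squared Sobolev norm of a vector field (sum over components). -/
def sobSqVec (k : ℕ) (S : Set (Fin 3 → ℝ)) (v : (Fin 3 → ℝ) → Fin 3 → ℝ) : ℝ :=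
  ∑ i : Fin 3, sobSq k S (fun x => v x i)

/-- Squared anisotropic Sobolev norm of a vector field. -/
def sobAnisoSqVec (m ℓ : ℕ) (S : Set (Fin 3 → ℝ)) (v : (Fin 3 → ℝ) → Fin 3 → ℝ) : ℝ :=
  ∑ i : Fin 3, sobAnisoSq m ℓ S (fun x => v x i)

/-- The curl of a vector field. -/
def curl (v : (Fin 3 → ℝ) → Fin 3 → ℝ) : (Fin 3 → ℝ) → Fin 3 → ℝ :=
  fun x => ![pd 1 (fun y => v y 2) x - pd 2 (fun y => v y 1) x,
             pd 2 (fun y => v y 0) x - pd 0 (fun y => v y 2) x,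
             pd 0 (fun y => v y 1) x - pd 1 (fun y => v y 0) x]

/-- The divergence of a vector field. -/
def divg (v : (Fin 3 → ℝ) → Fin 3 → ℝ) : (Fin 3 → ℝ) → ℝ :=
  fun x => pd 0 (fun y => v y 0) x + pd 1 (fun y => v y 1) x + pd 2 (fun y => v y 2) x

/-- The unit square `(0,1)² ⊆ ℝ²`. -/
def square2 : Set (ℝ × ℝ) := (Set.Ioo (0:ℝ) 1) ×ˢ (Set.Ioo (0:ℝ) 1)

/-- Fourier coefficient of a 1-periodic function on `ℝ²`. -/
def fCoeff (g : ℝ × ℝ → ℝ) (ξ : ℤ × ℤ) : ℂ :=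
  ∫ y in square2, (g y : ℂ) *
    Complex.exp ((((-2) * Real.pi * ((ξ.1 : ℝ) * y.1 + (ξ.2 : ℝ) * y.2) : ℝ) : ℂ) * Complex.I)

/-- The square of the Fourier Sobolev norm `|g|_s²` on `𝕋²`. -/
def torusSobSq (s : ℝ) (g : ℝ × ℝ → ℝ) : ℝ :=
  ∑' ξ : ℤ × ℤ, (1 + ((ξ.1 : ℝ)^2 + (ξ.2 : ℝ)^2)) ^ s * ‖fCoeff g ξ‖^2

/-- Squared torus Sobolev norm of a vector-valued boundary function. -/
def torusSobSqVec (s : ℝ) (g : ℝ × ℝ → Fin 3 → ℝ) : ℝ :=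
  ∑ i : Fin 3, torusSobSq s (fun y => g y i)

end


open intervalIntegral in
private lemma per1D {h : ℝ → ℝ} (hp : Function.Periodic h 1) (a : ℝ) :
    ∫ x in Set.Ioo (0:ℝ) 1, h (x + a) = ∫ x in Set.Ioo (0:ℝ) 1, h x := by
  rw [← MeasureTheory.integral_Ioc_eq_integral_Ioo, ← MeasureTheory.integral_Ioc_eq_integral_Ioo,
    ← intervalIntegral.integral_of_le zero_le_one, ← intervalIntegral.integral_of_le zero_le_one,
    intervalIntegral.integral_comp_add_right h a]
  simpa [add_comm] using hp.intervalIntegral_add_eq a 0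

private lemma key1D {g g' : ℝ → ℝ} (hg : ∀ t, HasDerivAt g (g' t) t) (hg' : Continuous g') :
    g 0 ^ 2 ≤ ∫ t in (-1:ℝ)..0, (2 * g t ^ 2 + g' t ^ 2) := by
  have hgc : Continuous g := by
    apply continuous_iff_continuousAt.2 fun t => (hg t).continuousAt
  have hd : ∀ t, HasDerivAt (fun t => g t ^ 2) (2 * g t * g' t) t := by
    intro t
    simpa [pow_one, mul_comm, mul_assoc] using (hg t).fun_pow 2
  have hid : Continuous fun t => 2 * g t * g' t := by continuity
  have hisum : Continuous fun t => g t ^ 2 + g' t ^ 2 := by continuity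
  set K := ∫ t in (-1:ℝ)..0, (g t ^ 2 + g' t ^ 2) with hK
  have hpt : ∀ s ∈ Set.Icc (-1:ℝ) 0, g 0 ^ 2 ≤ g s ^ 2 + K := by
    intro s hs
    have hftc : ∫ t in s..0, (2 * g t * g' t) = g 0 ^ 2 - g s ^ 2 :=
      intervalIntegral.integral_eq_sub_of_hasDerivAt (fun t _ => hd t)
        (hid.intervalIntegrable s 0)
    have h1 : ∫ t in s..0, (2 * g t * g' t) ≤ ∫ t in s..0, (g t ^ 2 + g' t ^ 2) :=
      intervalIntegral.integral_mono_on hs.2 (hid.intervalIntegrable s 0)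
        (hisum.intervalIntegrable s 0) (fun x _ => two_mul_le_add_sq (g x) (g' x))
    have h2 : ∫ t in s..0, (g t ^ 2 + g' t ^ 2) ≤ K :=
      intervalIntegral.integral_mono_interval hs.1 hs.2 le_rfl
        (Filter.Eventually.of_forall fun x => by positivity)
        (hisum.intervalIntegrable _ _)
    nlinarith [hftc ▸ h1.trans h2]
  have h3 : g 0 ^ 2 = ∫ s in (-1:ℝ)..0, g 0 ^ 2 := by simp
  have h4 : (∫ s in (-1:ℝ)..0, g 0 ^ 2) ≤ ∫ s in (-1:ℝ)..0, (g s ^ 2 + K) :=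
    intervalIntegral.integral_mono_on (by norm_num) (intervalIntegrable_const)
      (((hgc.pow 2).add continuous_const).intervalIntegrable _ _) hpt
  have h5 : (∫ s in (-1:ℝ)..0, (g s ^ 2 + K)) = (∫ s in (-1:ℝ)..0, g s ^ 2) + K := by
    rw [intervalIntegral.integral_add ((show Continuous fun s => g s ^ 2 from hgc.pow 2).intervalIntegrable _ _)
      intervalIntegrable_const]
    simp
  have h6 : (∫ s in (-1:ℝ)..0, g s ^ 2) + K = ∫ t in (-1:ℝ)..0, (2 * g t ^ 2 + g' t ^ 2) := by
    rw [hK, ← intervalIntegral.integral_add ((show Continuous fun s => g s ^ 2 from hgc.pow 2).intervalIntegrable _ _)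
      (hisum.intervalIntegrable _ _)]
    congr 1; funext t; ring
  linarith [h3 ▸ h4, h5, h6]

private lemma intOn_sq {φ : ℝ × ℝ → ℝ} (hφ : Continuous φ) :
    MeasureTheory.IntegrableOn φ square2 := by
  have : MeasureTheory.IntegrableOn φ (Set.Icc ((0:ℝ),(0:ℝ)) (1,1)) :=
    hφ.continuousOn.integrableOn_compact isCompact_Icc
  refine this.mono_set ?_
  rw [Set.Icc_prod_eq]
  exact Set.prod_mono Set.Ioo_subset_Icc_self Set.Ioo_subset_Icc_self

private lemma intOn_sqT {φ : (ℝ × ℝ) × ℝ → ℝ} (hφ : Continuous φ) :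
    MeasureTheory.IntegrableOn φ (square2 ×ˢ Set.Ioo (-1:ℝ) 0) := by
  have : MeasureTheory.IntegrableOn φ (Set.Icc (((0:ℝ),(0:ℝ)),(-1:ℝ)) ((1,1),0)) :=
    hφ.continuousOn.integrableOn_compact isCompact_Icc
  refine this.mono_set ?_
  rw [Set.Icc_prod_eq, Set.Icc_prod_eq]
  exact Set.prod_mono (Set.prod_mono Set.Ioo_subset_Icc_self Set.Ioo_subset_Icc_self)
    Set.Ioo_subset_Icc_self

private lemma intOn_Tsq {φ : ℝ × (ℝ × ℝ) → ℝ} (hφ : Continuous φ) :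
    MeasureTheory.IntegrableOn φ (Set.Ioo (-1:ℝ) 0 ×ˢ square2) := by
  have : MeasureTheory.IntegrableOn φ (Set.Icc ((-1:ℝ),((0:ℝ),(0:ℝ))) (0,(1,1))) :=
    hφ.continuousOn.integrableOn_compact isCompact_Icc
  refine this.mono_set ?_
  rw [Set.Icc_prod_eq, Set.Icc_prod_eq]
  exact Set.prod_mono Set.Ioo_subset_Icc_self
    (Set.prod_mono Set.Ioo_subset_Icc_self Set.Ioo_subset_Icc_self)

private lemma intOn_slab {φ : (Fin 3 → ℝ) → ℝ} (hφ : Continuous φ) :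
    MeasureTheory.IntegrableOn φ slabNeg := by
  have : MeasureTheory.IntegrableOn φ (Set.Icc (![0,0,-1] : Fin 3 → ℝ) ![1,1,0]) :=
    hφ.continuousOn.integrableOn_compact isCompact_Icc
  refine this.mono_set ?_
  intro x hx
  obtain ⟨h0, h1, h2⟩ := hx
  rw [Set.mem_Icc]
  constructor <;> intro i <;> fin_cases i <;>
    simp only [Matrix.cons_val_zero, Matrix.cons_val_one, Matrix.head_cons,
      Matrix.cons_val_two, Matrix.tail_cons] <;>
    first
      | exact le_of_lt h0.1 | exact le_of_lt h0.2
      | exact le_of_lt h1.1 | exact le_of_lt h1.2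
      | exact le_of_lt h2.1 | exact le_of_lt h2.2

private lemma per2D {G : ℝ × ℝ → ℝ} (hGc : Continuous G)
    (h1 : ∀ y : ℝ × ℝ, G (y.1 + 1, y.2) = G y) (h2 : ∀ y : ℝ × ℝ, G (y.1, y.2 + 1) = G y)
    (a b : ℝ) :
    ∫ y in square2, G (y.1 + a, y.2 + b) = ∫ y in square2, G y := by
  have hGab : Continuous fun y : ℝ × ℝ => G (y.1 + a, y.2 + b) := by continuity
  rw [show square2 = (Set.Ioo (0:ℝ) 1) ×ˢ (Set.Ioo (0:ℝ) 1) from rfl]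
  rw [MeasureTheory.Measure.volume_eq_prod ℝ ℝ]
  rw [MeasureTheory.setIntegral_prod _ (intOn_sq hGab),
    MeasureTheory.setIntegral_prod _ (intOn_sq hGc)]
  have step1 : ∀ u : ℝ, (∫ v in Set.Ioo (0:ℝ) 1, G (u + a, v + b))
      = ∫ v in Set.Ioo (0:ℝ) 1, G (u + a, v) := by
    intro u
    exact per1D (h := fun v => G (u + a, v)) (fun v => h2 (u + a, v)) b
  simp_rw [step1]
  have hswap1 : (∫ u in Set.Ioo (0:ℝ) 1, ∫ v in Set.Ioo (0:ℝ) 1, G (u + a, v))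
      = ∫ v in Set.Ioo (0:ℝ) 1, ∫ u in Set.Ioo (0:ℝ) 1, G (u + a, v) := by
    apply MeasureTheory.integral_integral_swap
    rw [MeasureTheory.Measure.prod_restrict]
    exact intOn_sq (hGc.comp ((continuous_fst.add continuous_const).prodMk continuous_snd))
  have hswap2 : (∫ u in Set.Ioo (0:ℝ) 1, ∫ v in Set.Ioo (0:ℝ) 1, G (u, v))
      = ∫ v in Set.Ioo (0:ℝ) 1, ∫ u in Set.Ioo (0:ℝ) 1, G (u, v) := by
    apply MeasureTheory.integral_integral_swap
    rw [MeasureTheory.Measure.prod_restrict]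
    exact intOn_sq (hGc.comp (continuous_fst.prodMk continuous_snd))
  rw [hswap1, hswap2]
  congr 1; funext v
  exact per1D (h := fun u => G (u, v)) (fun u => h1 (u, v)) a

noncomputable def E3 : (Fin 3 → ℝ) ≃ᵐ ℝ × (ℝ × ℝ) :=
  (MeasurableEquiv.piFinSuccAbove (fun _ => ℝ) 2).trans
    ((MeasurableEquiv.refl ℝ).prodCongr MeasurableEquiv.finTwoArrow)

private lemma hE3 : MeasureTheory.MeasurePreserving (⇑E3)
    MeasureTheory.volume MeasureTheory.volume :=
  ((MeasureTheory.MeasurePreserving.id MeasureTheory.volume).prod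
      (MeasureTheory.volume_preserving_finTwoArrow ℝ)).comp
    (MeasureTheory.volume_preserving_piFinSuccAbove (fun _ : Fin 3 => ℝ) 2)

private lemma slab_eq {F : (Fin 3 → ℝ) → ℝ} (hF : Continuous F) :
    ∫ x in slabNeg, F x
      = ∫ t in Set.Ioo (-1:ℝ) 0, ∫ y in square2, F ![y.1, y.2, t] := by
  have hpre : E3 ⁻¹' (Set.Ioo (-1:ℝ) 0 ×ˢ square2) = slabNeg := by
    ext x
    simp only [E3, slabNeg, square2, Set.mem_preimage, Set.mem_prod, Set.mem_setOf_eq]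
    constructor
    · rintro ⟨h2, h0, h1⟩; exact ⟨h0, h1, h2⟩
    · rintro ⟨h0, h1, h2⟩; exact ⟨h2, h0, h1⟩
  have hfun : (fun x : Fin 3 → ℝ => F x)
      = fun x => (fun z : ℝ × (ℝ × ℝ) => F ![z.2.1, z.2.2, z.1]) (E3 x) := by
    funext x
    have : ![x 0, x 1, x 2] = x := by funext i; fin_cases i <;> rfl
    show F x = F ![x 0, x 1, x 2]
    rw [this]
  have hcont : Continuous fun z : ℝ × (ℝ × ℝ) => F ![z.2.1, z.2.2, z.1] := by
    apply hF.comp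
    apply continuous_pi
    intro i; fin_cases i
    · exact (continuous_fst.comp continuous_snd)
    · exact (continuous_snd.comp continuous_snd)
    · exact continuous_fst
  calc ∫ x in slabNeg, F x
      = ∫ x in E3 ⁻¹' (Set.Ioo (-1:ℝ) 0 ×ˢ square2),
          (fun z : ℝ × (ℝ × ℝ) => F ![z.2.1, z.2.2, z.1]) (E3 x) := by
        rw [hpre, ← hfun]
    _ = ∫ z in Set.Ioo (-1:ℝ) 0 ×ˢ square2, F ![z.2.1, z.2.2, z.1] :=
        hE3.setIntegral_preimage_emb E3.measurableEmbedding
          (fun z : ℝ × (ℝ × ℝ) => F ![z.2.1, z.2.2, z.1]) _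
    _ = ∫ t in Set.Ioo (-1:ℝ) 0, ∫ y in square2, F ![y.1, y.2, t] := by
        rw [MeasureTheory.Measure.volume_eq_prod ℝ (ℝ × ℝ)]
        exact MeasureTheory.setIntegral_prod _ (by
          rw [← MeasureTheory.Measure.volume_eq_prod]; exact intOn_Tsq hcont)

private lemma comp_deriv {f : (Fin 3 → ℝ) → ℝ} (hf : ContDiff ℝ 1 f) (w v : Fin 3 → ℝ) (t : ℝ) :
    HasDerivAt (fun s => f (fun i => w i + v i * s))
      (fderiv ℝ f (fun i => w i + v i * t) v) t := by
  have hγ : HasDerivAt (fun s : ℝ => (fun i => w i + v i * s : Fin 3 → ℝ)) v t := by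
    apply hasDerivAt_pi.2; intro i
    simpa using ((hasDerivAt_id t).const_mul (v i)).const_add (w i)
  exact (((hf.differentiable one_ne_zero) _).hasFDerivAt).comp_hasDerivAt t hγ

private lemma fderiv_per {f : (Fin 3 → ℝ) → ℝ} (hf : ContDiff ℝ 1 f)
    {c : Fin 3 → ℝ} (hc : ∀ x, f (x + c) = f x) (x : Fin 3 → ℝ) :
    fderiv ℝ f (x + c) = fderiv ℝ f x := by
  have h1 : HasFDerivAt (fun y : Fin 3 → ℝ => y + c)
      (ContinuousLinearMap.id ℝ (Fin 3 → ℝ)) x := (hasFDerivAt_id x).add_const c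
  have h2 := (((hf.differentiable one_ne_zero) (x + c)).hasFDerivAt).comp x h1
  have h3 : (f ∘ fun y : Fin 3 → ℝ => y + c) = f := funext fun y => hc y
  rw [h3] at h2
  have := h2.fderiv
  rw [this]
  ext v
  simp

private lemma cont3 {α : Type*} [TopologicalSpace α] {p q r : α → ℝ}
    (hp : Continuous p) (hq : Continuous q) (hr : Continuous r) :
    Continuous fun a => (![p a, q a, r a] : Fin 3 → ℝ) := by
  apply continuous_pi; intro i; fin_cases i
  · exact hp
  · exact hq
  · exact hr

/-- Poincaré-type trace inequality on the lower slab: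
`|f|₀² ≲ B̄₃⁻² ‖(B̄·∇)f‖₀² + ‖f‖₀²` with trace on `Σ = {x₃ = 0}`. -/
theorem poincare_type_slab_upper_trace :
    ∃ C : ℝ, 0 < C ∧
      ∀ B : Fin 3 → ℝ, B 2 ≠ 0 →
        ∀ f : (Fin 3 → ℝ) → ℝ, ContDiff ℝ 1 f → HPeriodic f →
          (∫ y in square2, (f ![y.1, y.2, (0 : ℝ)]) ^ 2) ≤
            C * (((B 2) ^ 2)⁻¹ * (∫ x in slabNeg, (fderiv ℝ f x B) ^ 2)
              + ∫ x in slabNeg, (f x) ^ 2) := by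
  refine ⟨2, by norm_num, ?_⟩
  intro B hB3 f hf hper
  set c : ℝ := ((B 2) ^ 2)⁻¹ with hc
  set DfB : (Fin 3 → ℝ) → ℝ := fun x => fderiv ℝ f x B with hDfBdef
  have hfc : Continuous f := hf.continuous
  have hDfB : Continuous DfB :=
    (hf.continuous_fderiv one_ne_zero).clm_apply continuous_const
  have hcpos : 0 ≤ c := by positivity
  set V : (Fin 3 → ℝ) → ℝ := fun x => 2 * f x ^ 2 + c * DfB x ^ 2 with hV
  have hVc : Continuous V :=
    (continuous_const.mul (hfc.pow 2)).add (continuous_const.mul (hDfB.pow 2))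
  -- periodicity
  have hperf0 : ∀ x, f (x + Pi.single 0 1) = f x := fun x => (hper x).1
  have hperf1 : ∀ x, f (x + Pi.single 1 1) = f x := fun x => (hper x).2
  have hperD0 : ∀ x, DfB (x + Pi.single 0 1) = DfB x := fun x => by
    simp only [hDfBdef]; rw [fderiv_per hf hperf0]
  have hperD1 : ∀ x, DfB (x + Pi.single 1 1) = DfB x := fun x => by
    simp only [hDfBdef]; rw [fderiv_per hf hperf1]
  have hperV0 : ∀ x, V (x + Pi.single 0 1) = V x := fun x => by
    simp only [hV, hperf0 x, hperD0 x]
  have hperV1 : ∀ x, V (x + Pi.single 1 1) = V x := fun x => by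
    simp only [hV, hperf1 x, hperD1 x]
  -- the sheared characteristic direction
  set vB : Fin 3 → ℝ := (B 2)⁻¹ • B with hvB
  have hv2 : vB 2 = 1 := by
    simp only [hvB, Pi.smul_apply, smul_eq_mul]
    field_simp
  have hfdvB : ∀ x, fderiv ℝ f x vB = (B 2)⁻¹ * DfB x := fun x => by
    rw [hvB, _root_.map_smul, smul_eq_mul, hDfBdef]
  set Φ : ℝ × ℝ → ℝ → (Fin 3 → ℝ) :=
    fun y t => ![y.1 + vB 0 * t, y.2 + vB 1 * t, t] with hΦ
  have hΦeq : ∀ y t, Φ y t = fun i => (![y.1, y.2, 0] : Fin 3 → ℝ) i + vB i * t := by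
    intro y t; funext i; fin_cases i
    · simp [hΦ]
    · simp [hΦ]
    · simp [hΦ, hv2]
  have hΦcont : Continuous fun z : (ℝ × ℝ) × ℝ => Φ z.1 z.2 := by
    rw [hΦ]
    exact cont3 (by fun_prop) (by fun_prop) (by fun_prop)
  have hderiv : ∀ y t, HasDerivAt (fun s => f (Φ y s)) ((B 2)⁻¹ * DfB (Φ y t)) t := by
    intro y t
    have h := comp_deriv hf ![y.1, y.2, 0] vB t
    rw [← hΦeq y t, hfdvB] at h
    have e1 : (fun s => f (Φ y s))
        = fun s => f (fun i => (![y.1, y.2, 0] : Fin 3 → ℝ) i + vB i * s) := by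
      funext s; rw [hΦeq y s]
    rw [e1]
    exact h
  -- pointwise trace bound along characteristics
  have hpoint : ∀ y : ℝ × ℝ,
      (f ![y.1, y.2, (0:ℝ)]) ^ 2 ≤ ∫ t in Set.Ioo (-1:ℝ) 0, V (Φ y t) := by
    intro y
    have hg' : Continuous fun t => (B 2)⁻¹ * DfB (Φ y t) :=
      continuous_const.mul (hDfB.comp (hΦcont.comp (continuous_const.prodMk continuous_id)))
    have h := key1D (g := fun s => f (Φ y s)) (g' := fun t => (B 2)⁻¹ * DfB (Φ y t))
      (hderiv y) hg'
    have h0 : Φ y 0 = ![y.1, y.2, (0:ℝ)] := by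
      funext i; fin_cases i <;> simp [hΦ]
    have h' : (f ![y.1, y.2, (0:ℝ)]) ^ 2
        ≤ ∫ t in (-1:ℝ)..0, (2 * f (Φ y t) ^ 2 + ((B 2)⁻¹ * DfB (Φ y t)) ^ 2) := by
      rw [← h0]; exact h
    rw [intervalIntegral.integral_of_le (by norm_num : (-1:ℝ) ≤ 0),
      MeasureTheory.integral_Ioc_eq_integral_Ioo] at h'
    have hcongr : ∀ t : ℝ, 2 * f (Φ y t) ^ 2 + ((B 2)⁻¹ * DfB (Φ y t)) ^ 2 = V (Φ y t) := by
      intro t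
      rw [hV, mul_pow, inv_pow, ← hc]
    calc (f ![y.1, y.2, (0:ℝ)]) ^ 2
        ≤ ∫ t in Set.Ioo (-1:ℝ) 0, (2 * f (Φ y t) ^ 2 + ((B 2)⁻¹ * DfB (Φ y t)) ^ 2) := h'
      _ = ∫ t in Set.Ioo (-1:ℝ) 0, V (Φ y t) := by simp_rw [hcongr]
  -- integrability facts
  have hsq_meas : MeasurableSet square2 := measurableSet_Ioo.prod measurableSet_Ioo
  have hWcont : Continuous fun z : (ℝ × ℝ) × ℝ => V (Φ z.1 z.2) := hVc.comp hΦcont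
  have hWint : MeasureTheory.Integrable (fun z : (ℝ × ℝ) × ℝ => V (Φ z.1 z.2))
      ((MeasureTheory.volume.restrict square2).prod
        (MeasureTheory.volume.restrict (Set.Ioo (-1:ℝ) 0))) := by
    rw [MeasureTheory.Measure.prod_restrict]
    exact intOn_sqT hWcont
  have hIfun : MeasureTheory.IntegrableOn
      (fun y => ∫ t in Set.Ioo (-1:ℝ) 0, V (Φ y t)) square2 :=
    hWint.integral_prod_left
  -- step A : trace bounded by iterated integral
  have stepA : (∫ y in square2, (f ![y.1, y.2, (0:ℝ)]) ^ 2)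
      ≤ ∫ y in square2, ∫ t in Set.Ioo (-1:ℝ) 0, V (Φ y t) := by
    refine MeasureTheory.setIntegral_mono_on ?_ hIfun hsq_meas ?_
    · exact intOn_sq ((hfc.comp
        (cont3 continuous_fst continuous_snd continuous_const)).pow 2)
    · intro y _; exact hpoint y
  -- step B : Fubini swap
  have stepB : (∫ y in square2, ∫ t in Set.Ioo (-1:ℝ) 0, V (Φ y t))
      = ∫ t in Set.Ioo (-1:ℝ) 0, ∫ y in square2, V (Φ y t) :=
    MeasureTheory.integral_integral_swap hWint
  -- step C : horizontal translation invariance (periodicity)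
  have stepC : ∀ t : ℝ, (∫ y in square2, V (Φ y t)) = ∫ y in square2, V ![y.1, y.2, t] := by
    intro t
    have hG : Continuous fun y : ℝ × ℝ => V ![y.1, y.2, t] :=
      hVc.comp (cont3 continuous_fst continuous_snd continuous_const)
    have e01 : ∀ p q : ℝ, (![p + 1, q, t] : Fin 3 → ℝ) = ![p, q, t] + Pi.single 0 1 := by
      intro p q; funext i; fin_cases i <;> simp [Pi.single_apply]
    have e11 : ∀ p q : ℝ, (![p, q + 1, t] : Fin 3 → ℝ) = ![p, q, t] + Pi.single 1 1 := by
      intro p q; funext i; fin_cases i <;> simp [Pi.single_apply]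
    have hmain := per2D hG
      (fun y => by show V ![y.1 + 1, y.2, t] = V ![y.1, y.2, t]; rw [e01]; exact hperV0 _)
      (fun y => by show V ![y.1, y.2 + 1, t] = V ![y.1, y.2, t]; rw [e11]; exact hperV1 _)
      (vB 0 * t) (vB 1 * t)
    calc (∫ y in square2, V (Φ y t))
        = ∫ y in square2, V ![y.1 + vB 0 * t, y.2 + vB 1 * t, t] := by rw [hΦ]
      _ = ∫ y in square2, V ![y.1, y.2, t] := hmain
  -- step D : back to the slab
  have stepD : (∫ t in Set.Ioo (-1:ℝ) 0, ∫ y in square2, V ![y.1, y.2, t])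
      = ∫ x in slabNeg, V x := (slab_eq hVc).symm
  -- step E : split the integral
  have stepE : (∫ x in slabNeg, V x)
      = 2 * (∫ x in slabNeg, f x ^ 2) + c * ∫ x in slabNeg, DfB x ^ 2 := by
    rw [hV, MeasureTheory.integral_add
      (intOn_slab (show Continuous fun x => 2 * f x ^ 2 from continuous_const.mul (hfc.pow 2)))
      (intOn_slab (show Continuous fun x => c * DfB x ^ 2 from continuous_const.mul (hDfB.pow 2))),
      MeasureTheory.integral_const_mul, MeasureTheory.integral_const_mul]
  have hnn : 0 ≤ c * ∫ x in slabNeg, DfB x ^ 2 :=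
    mul_nonneg hcpos (MeasureTheory.integral_nonneg fun x => sq_nonneg _)
  have chain : (∫ y in square2, (f ![y.1, y.2, (0:ℝ)]) ^ 2)
      ≤ 2 * (∫ x in slabNeg, f x ^ 2) + c * ∫ x in slabNeg, DfB x ^ 2 := by
    calc (∫ y in square2, (f ![y.1, y.2, (0:ℝ)]) ^ 2)
        ≤ ∫ y in square2, ∫ t in Set.Ioo (-1:ℝ) 0, V (Φ y t) := stepA
      _ = ∫ t in Set.Ioo (-1:ℝ) 0, ∫ y in square2, V (Φ y t) := stepB
      _ = ∫ t in Set.Ioo (-1:ℝ) 0, ∫ y in square2, V ![y.1, y.2, t] := by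
          simp_rw [stepC]
      _ = ∫ x in slabNeg, V x := stepD
      _ = 2 * (∫ x in slabNeg, f x ^ 2) + c * ∫ x in slabNeg, DfB x ^ 2 := stepE
  linarith
end

section
/- Hodge-type estimate without boundary conditions: for every integer r ≥ 1 there exists a constant C > 0 such that for every smooth vector field v : ℝ³ → ℝ³ that is 1-periodic in x₁ and x₂, one has ‖v‖_r² ≤ C ( ‖v‖_{0,r}² + ‖(curl v)_h‖_{r−1}² + ‖div v‖_{r−1}² ), where all Sobolev norms are taken over the slab Ω = 𝕋² × (−1,1). -/
open MeasureTheory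

section HodgeAux

open MeasureTheory

local notation "E3" => (Fin 3 → ℝ)

private lemma htop1 : ((⊤:ℕ∞) : WithTop ℕ∞) + 1 ≤ ((⊤:ℕ∞) : WithTop ℕ∞) := by
  exact_mod_cast (by simp : ((⊤:ℕ∞)+1 ≤ (⊤:ℕ∞)))

private lemma htop2 : (2 : WithTop ℕ∞) ≤ ((⊤:ℕ∞) : WithTop ℕ∞) := by
  have h : ((2:ℕ∞) : WithTop ℕ∞) ≤ ((⊤:ℕ∞) : WithTop ℕ∞) := WithTop.coe_le_coe.2 le_top
  simpa using h

private lemma htop1' : (1 : WithTop ℕ∞) ≤ ((⊤:ℕ∞) : WithTop ℕ∞) :=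
  le_trans one_le_two htop2

lemma contDiff_pd {f : E3 → ℝ} (hf : ContDiff ℝ (⊤ : ℕ∞) f) (i : Fin 3) :
    ContDiff ℝ (⊤ : ℕ∞) (pd i f) := by
  have h1 : ContDiff ℝ (⊤ : ℕ∞) (fderiv ℝ f) :=
    hf.fderiv_right htop1
  exact (ContinuousLinearMap.apply ℝ ℝ (Pi.single i 1)).contDiff.comp h1

lemma pd_comm {f : E3 → ℝ} (hf : ContDiff ℝ (⊤ : ℕ∞) f) (i j : Fin 3) :
    pd i (pd j f) = pd j (pd i f) := by
  funext x
  have hsym : IsSymmSndFDerivAt ℝ f x :=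
    hf.contDiffAt.isSymmSndFDerivAt (by rw [minSmoothness_of_isRCLikeNormedField]; exact htop2)
  have key : ∀ k l : Fin 3, pd k (pd l f) x
      = fderiv ℝ (fderiv ℝ f) x (Pi.single k 1) (Pi.single l 1) := by
    intro k l
    have hdiff : DifferentiableAt ℝ (fderiv ℝ f) x :=
      ((hf.fderiv_right htop1).differentiable (zero_lt_one.trans_le htop1').ne') x
    have hder0 :=
      (ContinuousLinearMap.apply ℝ ℝ (Pi.single l 1)).hasFDerivAt.comp x
        hdiff.hasFDerivAt
    have heq : (⇑(ContinuousLinearMap.apply ℝ ℝ (Pi.single l 1)) ∘ fderiv ℝ f)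
        = pd l f := rfl
    rw [heq] at hder0
    show fderiv ℝ (pd l f) x (Pi.single k 1) = _
    rw [hder0.fderiv]; rfl
  rw [key i j, key j i]; exact hsym _ _

lemma pd_add {f g : E3 → ℝ} (hf : ContDiff ℝ (⊤ : ℕ∞) f) (hg : ContDiff ℝ (⊤ : ℕ∞) g)
    (i : Fin 3) : pd i (fun x => f x + g x) = fun x => pd i f x + pd i g x := by
  funext x
  have := fderiv_fun_add (𝕜 := ℝ)
    ((hf.differentiable (zero_lt_one.trans_le htop1').ne') x)
    ((hg.differentiable (zero_lt_one.trans_le htop1').ne') x)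
  simp only [pd, this, ContinuousLinearMap.add_apply]

lemma pd_sub {f g : E3 → ℝ} (hf : ContDiff ℝ (⊤ : ℕ∞) f) (hg : ContDiff ℝ (⊤ : ℕ∞) g)
    (i : Fin 3) : pd i (fun x => f x - g x) = fun x => pd i f x - pd i g x := by
  funext x
  have := fderiv_fun_sub (𝕜 := ℝ)
    ((hf.differentiable (zero_lt_one.trans_le htop1').ne') x)
    ((hg.differentiable (zero_lt_one.trans_le htop1').ne') x)
  simp only [pd, this, ContinuousLinearMap.sub_apply]

lemma contDiff_pd_iter {f : E3 → ℝ} (hf : ContDiff ℝ (⊤ : ℕ∞) f) (i : Fin 3) :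
    ∀ n, ContDiff ℝ (⊤ : ℕ∞) ((pd i)^[n] f) := by
  intro n
  induction n with
  | zero => simpa using hf
  | succ n ih =>
      rw [Function.iterate_succ_apply']
      exact contDiff_pd ih i

lemma pd_iter_comm {i j : Fin 3} : ∀ (n : ℕ) (f : E3 → ℝ), ContDiff ℝ (⊤ : ℕ∞) f →
    pd j ((pd i)^[n] f) = (pd i)^[n] (pd j f) := by
  intro n
  induction n with
  | zero => intro f _; simp
  | succ n ih =>
      intro f hf
      rw [Function.iterate_succ_apply, ih (pd i f) (contDiff_pd hf i),
        pd_comm hf j i, ← Function.iterate_succ_apply]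

lemma pd_iter_add {i : Fin 3} : ∀ (n : ℕ) (f g : E3 → ℝ), ContDiff ℝ (⊤ : ℕ∞) f →
    ContDiff ℝ (⊤ : ℕ∞) g →
    (pd i)^[n] (fun x => f x + g x) = fun x => (pd i)^[n] f x + (pd i)^[n] g x := by
  intro n
  induction n with
  | zero => intro f g _ _; simp
  | succ n ih =>
      intro f g hf hg
      rw [Function.iterate_succ_apply, Function.iterate_succ_apply,
        Function.iterate_succ_apply, pd_add hf hg i,
        ih _ _ (contDiff_pd hf i) (contDiff_pd hg i)]

lemma pd_iter_sub {i : Fin 3} : ∀ (n : ℕ) (f g : E3 → ℝ), ContDiff ℝ (⊤ : ℕ∞) f →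
    ContDiff ℝ (⊤ : ℕ∞) g →
    (pd i)^[n] (fun x => f x - g x) = fun x => (pd i)^[n] f x - (pd i)^[n] g x := by
  intro n
  induction n with
  | zero => intro f g _ _; simp
  | succ n ih =>
      intro f g hf hg
      rw [Function.iterate_succ_apply, Function.iterate_succ_apply,
        Function.iterate_succ_apply, pd_sub hf hg i,
        ih _ _ (contDiff_pd hf i) (contDiff_pd hg i)]

lemma contDiff_pdIter {f : E3 → ℝ} (hf : ContDiff ℝ (⊤ : ℕ∞) f) (a b c : ℕ) :
    ContDiff ℝ (⊤ : ℕ∞) (pdIter a b c f) :=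
  contDiff_pd_iter (contDiff_pd_iter (contDiff_pd_iter hf 2 c) 1 b) 0 a

lemma pdIter_add {f g : E3 → ℝ} (hf : ContDiff ℝ (⊤ : ℕ∞) f) (hg : ContDiff ℝ (⊤ : ℕ∞) g)
    (a b c : ℕ) :
    pdIter a b c (fun x => f x + g x) = fun x => pdIter a b c f x + pdIter a b c g x := by
  unfold pdIter
  rw [pd_iter_add c f g hf hg,
    pd_iter_add b _ _ (contDiff_pd_iter hf 2 c) (contDiff_pd_iter hg 2 c),
    pd_iter_add a _ _ (contDiff_pd_iter (contDiff_pd_iter hf 2 c) 1 b)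
      (contDiff_pd_iter (contDiff_pd_iter hg 2 c) 1 b)]

lemma pdIter_sub {f g : E3 → ℝ} (hf : ContDiff ℝ (⊤ : ℕ∞) f) (hg : ContDiff ℝ (⊤ : ℕ∞) g)
    (a b c : ℕ) :
    pdIter a b c (fun x => f x - g x) = fun x => pdIter a b c f x - pdIter a b c g x := by
  unfold pdIter
  rw [pd_iter_sub c f g hf hg,
    pd_iter_sub b _ _ (contDiff_pd_iter hf 2 c) (contDiff_pd_iter hg 2 c),
    pd_iter_sub a _ _ (contDiff_pd_iter (contDiff_pd_iter hf 2 c) 1 b)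
      (contDiff_pd_iter (contDiff_pd_iter hg 2 c) 1 b)]

lemma pdIter_succ_c {f : E3 → ℝ} (a b c : ℕ) :
    pdIter a b (c+1) f = pdIter a b c (pd 2 f) := by
  unfold pdIter; rw [Function.iterate_succ_apply]

lemma pdIter_pd0 {f : E3 → ℝ} (hf : ContDiff ℝ (⊤ : ℕ∞) f) (a b c : ℕ) :
    pdIter a b c (pd 0 f) = pdIter (a+1) b c f := by
  unfold pdIter
  rw [← pd_iter_comm c f hf, ← pd_iter_comm b _ (contDiff_pd_iter hf 2 c),
    ← Function.iterate_succ_apply]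

lemma pdIter_pd1 {f : E3 → ℝ} (hf : ContDiff ℝ (⊤ : ℕ∞) f) (a b c : ℕ) :
    pdIter a b c (pd 1 f) = pdIter a (b+1) c f := by
  unfold pdIter
  rw [← pd_iter_comm c f hf, ← Function.iterate_succ_apply]

end HodgeAux
section HodgeAux2

open MeasureTheory

local notation "E3" => (Fin 3 → ℝ)

lemma integrableOn_sq_slab {f : E3 → ℝ} (hf : Continuous f) :
    IntegrableOn (fun x => f x ^ 2) slabFull := by
  have hsub : slabFull ⊆
      Set.Icc (fun i : Fin 3 => if i = 2 then (-1:ℝ) else 0) (fun _ => (1:ℝ)) := by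
    intro x hx
    simp only [slabFull, Set.mem_setOf_eq, Set.mem_Ioo] at hx
    obtain ⟨h0, h1, h2⟩ := hx
    refine Set.mem_Icc.2 ⟨fun i => ?_, fun i => ?_⟩ <;> fin_cases i <;> simp <;>
      first
        | exact h0.1.le | exact h1.1.le | exact h2.1.le
        | exact h0.2.le | exact h1.2.le | exact h2.2.le
  exact ((hf.pow 2).integrableOn_Icc).mono_set hsub

lemma int_sq_nonneg (f : E3 → ℝ) (S : Set E3) :
    0 ≤ ∫ x in S, f x ^ 2 :=
  integral_nonneg fun x => sq_nonneg _

lemma int_sq_add_le {f g : E3 → ℝ} (hf : Continuous f) (hg : Continuous g) :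
    (∫ x in slabFull, (f x + g x) ^ 2)
      ≤ 2 * (∫ x in slabFull, f x ^ 2) + 2 * (∫ x in slabFull, g x ^ 2) := by
  have h1 : IntegrableOn (fun x => (f x + g x) ^ 2) slabFull :=
    integrableOn_sq_slab (hf.add hg)
  have h2 := integrableOn_sq_slab hf
  have h3 := integrableOn_sq_slab hg
  have hfg : IntegrableOn (fun x => 2 * f x ^ 2 + 2 * g x ^ 2) slabFull :=
    (h2.const_mul 2).add (h3.const_mul 2)
  have hmono : (∫ x in slabFull, (f x + g x) ^ 2)
      ≤ ∫ x in slabFull, (2 * f x ^ 2 + 2 * g x ^ 2) := by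
    refine integral_mono h1 hfg ?_
    intro x
    show (f x + g x) ^ 2 ≤ 2 * f x ^ 2 + 2 * g x ^ 2
    nlinarith [sq_nonneg (f x - g x)]
  calc (∫ x in slabFull, (f x + g x) ^ 2)
      ≤ ∫ x in slabFull, (2 * f x ^ 2 + 2 * g x ^ 2) := hmono
    _ = 2 * (∫ x in slabFull, f x ^ 2) + 2 * (∫ x in slabFull, g x ^ 2) := by
        rw [integral_add (h2.const_mul 2) (h3.const_mul 2),
          integral_const_mul, integral_const_mul]

lemma int_sq_sub_le {f g : E3 → ℝ} (hf : Continuous f) (hg : Continuous g) :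
    (∫ x in slabFull, (f x - g x) ^ 2)
      ≤ 2 * (∫ x in slabFull, f x ^ 2) + 2 * (∫ x in slabFull, g x ^ 2) := by
  have := int_sq_add_le hf hg.neg
  simpa [sub_eq_add_neg] using this

lemma int_sq_sub3_le {f g h : E3 → ℝ} (hf : Continuous f) (hg : Continuous g)
    (hh : Continuous h) :
    (∫ x in slabFull, (f x - g x - h x) ^ 2)
      ≤ 3 * (∫ x in slabFull, f x ^ 2) + 3 * (∫ x in slabFull, g x ^ 2)
        + 3 * (∫ x in slabFull, h x ^ 2) := by
  have h1 : IntegrableOn (fun x => (f x - g x - h x) ^ 2) slabFull :=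
    integrableOn_sq_slab ((hf.sub hg).sub hh)
  have h2 := integrableOn_sq_slab hf
  have h3 := integrableOn_sq_slab hg
  have h4 := integrableOn_sq_slab hh
  have hfg : IntegrableOn (fun x => 3 * f x ^ 2 + 3 * g x ^ 2) slabFull :=
    (h2.const_mul 3).add (h3.const_mul 3)
  have hfgh : IntegrableOn (fun x => 3 * f x ^ 2 + 3 * g x ^ 2 + 3 * h x ^ 2) slabFull :=
    hfg.add (h4.const_mul 3)
  have hmono : (∫ x in slabFull, (f x - g x - h x) ^ 2)
      ≤ ∫ x in slabFull, (3 * f x ^ 2 + 3 * g x ^ 2 + 3 * h x ^ 2) := by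
    refine integral_mono h1 hfgh ?_
    intro x
    show (f x - g x - h x) ^ 2 ≤ 3 * f x ^ 2 + 3 * g x ^ 2 + 3 * h x ^ 2
    nlinarith [sq_nonneg (f x + g x), sq_nonneg (f x + h x), sq_nonneg (g x - h x)]
  calc (∫ x in slabFull, (f x - g x - h x) ^ 2)
      ≤ ∫ x in slabFull, (3 * f x ^ 2 + 3 * g x ^ 2 + 3 * h x ^ 2) := hmono
    _ = _ := by
        rw [integral_add hfg (h4.const_mul 3), integral_add (h2.const_mul 3) (h3.const_mul 3),
          integral_const_mul, integral_const_mul, integral_const_mul]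

end HodgeAux2
section HodgeAux3

open MeasureTheory

local notation "E3" => (Fin 3 → ℝ)

lemma sobSq_term_nonneg (k : ℕ) (S : Set E3) (f : E3 → ℝ) (a b c : ℕ) :
    0 ≤ if a + b + c ≤ k then ∫ x in S, (pdIter a b c f x)^2 else 0 := by
  split
  · exact int_sq_nonneg _ _
  · exact le_rfl

lemma sobSq_nonneg (k : ℕ) (S : Set E3) (f : E3 → ℝ) : 0 ≤ sobSq k S f :=
  Finset.sum_nonneg fun a _ => Finset.sum_nonneg fun b _ =>
    Finset.sum_nonneg fun c _ => sobSq_term_nonneg k S f a b c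

lemma sobAnisoSq_nonneg (m ℓ : ℕ) (S : Set E3) (f : E3 → ℝ) :
    0 ≤ sobAnisoSq m ℓ S f :=
  Finset.sum_nonneg fun a _ => Finset.sum_nonneg fun b _ => by
    split
    · exact sobSq_nonneg _ _ _
    · exact le_rfl

lemma sobAnisoSqVec_nonneg (m ℓ : ℕ) (S : Set E3) (v : E3 → Fin 3 → ℝ) :
    0 ≤ sobAnisoSqVec m ℓ S v :=
  Finset.sum_nonneg fun i _ => sobAnisoSq_nonneg _ _ _ _

lemma term_le_sobSq {k a b c : ℕ} (S : Set E3) (f : E3 → ℝ) (h : a + b + c ≤ k) :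
    (∫ x in S, (pdIter a b c f x)^2) ≤ sobSq k S f := by
  have ha : a ∈ Finset.range (k+1) := Finset.mem_range.2 (by omega)
  have hb : b ∈ Finset.range (k+1) := Finset.mem_range.2 (by omega)
  have hc : c ∈ Finset.range (k+1) := Finset.mem_range.2 (by omega)
  have t1 : (∫ x in S, (pdIter a b c f x)^2)
      ≤ ∑ c' ∈ Finset.range (k+1),
          if a + b + c' ≤ k then ∫ x in S, (pdIter a b c' f x)^2 else 0 := by
    have := Finset.single_le_sum
      (f := fun c' => if a + b + c' ≤ k then ∫ x in S, (pdIter a b c' f x)^2 else 0)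
      (fun c' _ => sobSq_term_nonneg k S f a b c') hc
    rwa [if_pos h] at this
  have t2 : (∑ c' ∈ Finset.range (k+1),
        if a + b + c' ≤ k then ∫ x in S, (pdIter a b c' f x)^2 else 0)
      ≤ ∑ b' ∈ Finset.range (k+1), ∑ c' ∈ Finset.range (k+1),
          if a + b' + c' ≤ k then ∫ x in S, (pdIter a b' c' f x)^2 else 0 :=
    Finset.single_le_sum
      (f := fun b' => ∑ c' ∈ Finset.range (k+1),
        if a + b' + c' ≤ k then ∫ x in S, (pdIter a b' c' f x)^2 else 0)
      (fun b' _ => Finset.sum_nonneg fun c' _ => sobSq_term_nonneg k S f a b' c') hb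
  have t3 : (∑ b' ∈ Finset.range (k+1), ∑ c' ∈ Finset.range (k+1),
        if a + b' + c' ≤ k then ∫ x in S, (pdIter a b' c' f x)^2 else 0)
      ≤ sobSq k S f :=
    Finset.single_le_sum
      (f := fun a' => ∑ b' ∈ Finset.range (k+1), ∑ c' ∈ Finset.range (k+1),
        if a' + b' + c' ≤ k then ∫ x in S, (pdIter a' b' c' f x)^2 else 0)
      (fun a' _ => Finset.sum_nonneg fun b' _ =>
        Finset.sum_nonneg fun c' _ => sobSq_term_nonneg k S f a' b' c') ha
  exact le_trans t1 (le_trans t2 t3)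

lemma sobSq_zero (S : Set E3) (f : E3 → ℝ) : sobSq 0 S f = ∫ x in S, f x ^ 2 := by
  simp [sobSq, pdIter]

lemma term_le_sobAnisoSq {r a b : ℕ} (S : Set E3) (f : E3 → ℝ) (h : a + b ≤ r) :
    (∫ x in S, ((pd 0)^[a] ((pd 1)^[b] f) x)^2) ≤ sobAnisoSq 0 r S f := by
  have ha : a ∈ Finset.range (r+1) := Finset.mem_range.2 (by omega)
  have hb : b ∈ Finset.range (r+1) := Finset.mem_range.2 (by omega)
  have t1 : (∫ x in S, ((pd 0)^[a] ((pd 1)^[b] f) x)^2)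
      ≤ ∑ b' ∈ Finset.range (r+1),
          if a + b' ≤ r then sobSq 0 S ((pd 0)^[a] ((pd 1)^[b'] f)) else 0 := by
    have := Finset.single_le_sum
      (f := fun b' => if a + b' ≤ r then sobSq 0 S ((pd 0)^[a] ((pd 1)^[b'] f)) else 0)
      (fun b' _ => by first
        | (dsimp only; split; exacts [sobSq_nonneg _ _ _, le_rfl])
        | (split; exacts [sobSq_nonneg _ _ _, le_rfl])) hb
    rwa [if_pos h, sobSq_zero] at this
  refine le_trans t1 ?_
  exact Finset.single_le_sum
    (f := fun a' => ∑ b' ∈ Finset.range (r+1),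
      if a' + b' ≤ r then sobSq 0 S ((pd 0)^[a'] ((pd 1)^[b'] f)) else 0)
    (fun a' _ => Finset.sum_nonneg fun b' _ => by
      first
        | (dsimp only; split; exacts [sobSq_nonneg _ _ _, le_rfl])
        | (split; exacts [sobSq_nonneg _ _ _, le_rfl])) ha

lemma pdIter_zero_c (a b : ℕ) (f : E3 → ℝ) :
    pdIter a b 0 f = (pd 0)^[a] ((pd 1)^[b] f) := rfl

lemma sobAnisoSq_le_vec (r : ℕ) (S : Set E3) (v : E3 → Fin 3 → ℝ) (i : Fin 3) :
    sobAnisoSq 0 r S (fun x => v x i) ≤ sobAnisoSqVec 0 r S v :=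
  Finset.single_le_sum (f := fun j => sobAnisoSq 0 r S (fun x => v x j))
    (fun j _ => sobAnisoSq_nonneg _ _ _ _) (Finset.mem_univ i)

-- reduction identities
lemma pd2_comp0 (v : E3 → Fin 3 → ℝ) :
    pd 2 (fun x => v x 0) = fun x => (fun y => curl v y 1) x + pd 0 (fun y => v y 2) x := by
  funext x
  simp only [curl, Matrix.cons_val_one, Matrix.head_cons, Matrix.cons_val_zero]
  ring

lemma pd2_comp1 (v : E3 → Fin 3 → ℝ) :
    pd 2 (fun x => v x 1) = fun x => pd 1 (fun y => v y 2) x - (fun y => curl v y 0) x := by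
  funext x
  simp only [curl, Matrix.cons_val_zero]
  ring

lemma pd2_comp2 (v : E3 → Fin 3 → ℝ) :
    pd 2 (fun x => v x 2)
      = fun x => divg v x - pd 0 (fun y => v y 0) x - pd 1 (fun y => v y 1) x := by
  funext x
  simp only [divg]
  ring

end HodgeAux3
section HodgeAux4

open MeasureTheory

local notation "E3" => (Fin 3 → ℝ)

lemma comp_smooth {v : E3 → Fin 3 → ℝ} (hv : ContDiff ℝ (⊤ : ℕ∞) v) (i : Fin 3) :
    ContDiff ℝ (⊤ : ℕ∞) (fun x => v x i) :=
  contDiff_pi.mp hv i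

lemma curl0_smooth {v : E3 → Fin 3 → ℝ} (hv : ContDiff ℝ (⊤ : ℕ∞) v) :
    ContDiff ℝ (⊤ : ℕ∞) (fun x => curl v x 0) := by
  have : (fun x => curl v x 0)
      = fun x => pd 1 (fun y => v y 2) x - pd 2 (fun y => v y 1) x := by
    funext x; simp [curl]
  rw [this]
  exact (contDiff_pd (comp_smooth hv 2) 1).sub (contDiff_pd (comp_smooth hv 1) 2)

lemma curl1_smooth {v : E3 → Fin 3 → ℝ} (hv : ContDiff ℝ (⊤ : ℕ∞) v) :
    ContDiff ℝ (⊤ : ℕ∞) (fun x => curl v x 1) := by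
  have : (fun x => curl v x 1)
      = fun x => pd 2 (fun y => v y 0) x - pd 0 (fun y => v y 2) x := by
    funext x; simp [curl]
  rw [this]
  exact (contDiff_pd (comp_smooth hv 0) 2).sub (contDiff_pd (comp_smooth hv 2) 0)

lemma divg_smooth {v : E3 → Fin 3 → ℝ} (hv : ContDiff ℝ (⊤ : ℕ∞) v) :
    ContDiff ℝ (⊤ : ℕ∞) (divg v) := by
  unfold divg
  exact ((contDiff_pd (comp_smooth hv 0) 0).add (contDiff_pd (comp_smooth hv 1) 1)).add
    (contDiff_pd (comp_smooth hv 2) 2)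

lemma hodge_main (r : ℕ) (hr : 1 ≤ r) (v : E3 → Fin 3 → ℝ)
    (hv : ContDiff ℝ (⊤ : ℕ∞) v) :
    ∀ c a b : ℕ, ∀ i : Fin 3, a + b + c ≤ r →
      (∫ x in slabFull, (pdIter a b c (fun x => v x i) x)^2)
        ≤ 16^c * (sobAnisoSqVec 0 r slabFull v
            + sobSq (r - 1) slabFull (fun x => curl v x 0)
            + sobSq (r - 1) slabFull (fun x => curl v x 1)
            + sobSq (r - 1) slabFull (divg v)) := by
  have hA : 0 ≤ sobAnisoSqVec 0 r slabFull v := sobAnisoSqVec_nonneg _ _ _ _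
  have hB : 0 ≤ sobSq (r - 1) slabFull (fun x => curl v x 0) := sobSq_nonneg _ _ _
  have hC : 0 ≤ sobSq (r - 1) slabFull (fun x => curl v x 1) := sobSq_nonneg _ _ _
  have hD : 0 ≤ sobSq (r - 1) slabFull (divg v) := sobSq_nonneg _ _ _
  set R : ℝ := sobAnisoSqVec 0 r slabFull v
      + sobSq (r - 1) slabFull (fun x => curl v x 0)
      + sobSq (r - 1) slabFull (fun x => curl v x 1)
      + sobSq (r - 1) slabFull (divg v) with hRdef
  have hR : 0 ≤ R := by rw [hRdef]; linarith
  -- bounds by single pieces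
  have hboundA : ∀ a b : ℕ, ∀ i : Fin 3, a + b ≤ r →
      (∫ x in slabFull, (pdIter a b 0 (fun x => v x i) x)^2) ≤ R := by
    intro a b i h
    rw [pdIter_zero_c]
    have h1 := term_le_sobAnisoSq slabFull (fun x => v x i) h
    have h2 := sobAnisoSq_le_vec r slabFull v i
    rw [hRdef]; linarith
  have hboundB : ∀ a b c : ℕ, a + b + c ≤ r - 1 →
      (∫ x in slabFull, (pdIter a b c (fun x => curl v x 0) x)^2) ≤ R := by
    intro a b c h
    have := term_le_sobSq slabFull (fun x => curl v x 0) h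
    rw [hRdef]; linarith
  have hboundC : ∀ a b c : ℕ, a + b + c ≤ r - 1 →
      (∫ x in slabFull, (pdIter a b c (fun x => curl v x 1) x)^2) ≤ R := by
    intro a b c h
    have := term_le_sobSq slabFull (fun x => curl v x 1) h
    rw [hRdef]; linarith
  have hboundD : ∀ a b c : ℕ, a + b + c ≤ r - 1 →
      (∫ x in slabFull, (pdIter a b c (divg v) x)^2) ≤ R := by
    intro a b c h
    have := term_le_sobSq slabFull (divg v) h
    rw [hRdef]; linarith
  intro c
  induction c with
  | zero =>
      intro a b i h
      have := hboundA a b i (by omega)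
      simpa using this
  | succ c ih =>
      intro a b i h
      have h16 : (1:ℝ) ≤ 16^c := one_le_pow₀ (by norm_num)
      have hc1 : a + b + c ≤ r - 1 := by omega
      have hi : i = 0 ∨ i = 1 ∨ i = 2 := by
        fin_cases i
        · exact Or.inl rfl
        · exact Or.inr (Or.inl rfl)
        · exact Or.inr (Or.inr rfl)
      rcases hi with rfl | rfl | rfl
      · -- i = 0
        have key : pdIter a b (c+1) (fun x => v x 0)
            = fun x => pdIter a b c (fun y => curl v y 1) x
                + pdIter (a+1) b c (fun y => v y 2) x := by
          rw [pdIter_succ_c, pd2_comp0 v,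
            pdIter_add (curl1_smooth hv) (contDiff_pd (comp_smooth hv 2) 0),
            pdIter_pd0 (comp_smooth hv 2)]
        rw [key]
        have hint := int_sq_add_le
          (contDiff_pdIter (curl1_smooth hv) a b c).continuous
          (contDiff_pdIter (comp_smooth hv 2) (a+1) b c).continuous
        have e1 := hboundC a b c hc1
        have e2 := ih (a+1) b 2 (by omega)
        calc (∫ x in slabFull, (pdIter a b c (fun y => curl v y 1) x
                + pdIter (a+1) b c (fun y => v y 2) x)^2)
            ≤ 2 * (∫ x in slabFull, (pdIter a b c (fun y => curl v y 1) x)^2)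
              + 2 * (∫ x in slabFull, (pdIter (a+1) b c (fun y => v y 2) x)^2) := hint
          _ ≤ 2 * R + 2 * (16^c * R) := by
              linarith [hboundC a b c hc1, ih (a+1) b 2 (by omega)]
          _ ≤ 16^(c+1) * R := by rw [pow_succ]; nlinarith
      · -- i = 1
        have key : pdIter a b (c+1) (fun x => v x 1)
            = fun x => pdIter a (b+1) c (fun y => v y 2) x
                - pdIter a b c (fun y => curl v y 0) x := by
          rw [pdIter_succ_c, pd2_comp1 v,
            pdIter_sub (contDiff_pd (comp_smooth hv 2) 1) (curl0_smooth hv),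
            pdIter_pd1 (comp_smooth hv 2)]
        rw [key]
        have hint := int_sq_sub_le
          (contDiff_pdIter (comp_smooth hv 2) a (b+1) c).continuous
          (contDiff_pdIter (curl0_smooth hv) a b c).continuous
        calc (∫ x in slabFull, (pdIter a (b+1) c (fun y => v y 2) x
                - pdIter a b c (fun y => curl v y 0) x)^2)
            ≤ 2 * (∫ x in slabFull, (pdIter a (b+1) c (fun y => v y 2) x)^2)
              + 2 * (∫ x in slabFull, (pdIter a b c (fun y => curl v y 0) x)^2) := hint
          _ ≤ 2 * (16^c * R) + 2 * R := by
              linarith [ih a (b+1) 2 (by omega), hboundB a b c hc1]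
          _ ≤ 16^(c+1) * R := by rw [pow_succ]; nlinarith
      · -- i = 2
        have key : pdIter a b (c+1) (fun x => v x 2)
            = fun x => pdIter a b c (divg v) x
                - pdIter (a+1) b c (fun y => v y 0) x
                - pdIter a (b+1) c (fun y => v y 1) x := by
          rw [pdIter_succ_c, pd2_comp2 v]
          rw [pdIter_sub ((divg_smooth hv).sub (contDiff_pd (comp_smooth hv 0) 0))
            (contDiff_pd (comp_smooth hv 1) 1)]
          rw [pdIter_sub (divg_smooth hv) (contDiff_pd (comp_smooth hv 0) 0)]
          rw [pdIter_pd0 (comp_smooth hv 0), pdIter_pd1 (comp_smooth hv 1)]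
        rw [key]
        have hint := int_sq_sub3_le
          (contDiff_pdIter (divg_smooth hv) a b c).continuous
          (contDiff_pdIter (comp_smooth hv 0) (a+1) b c).continuous
          (contDiff_pdIter (comp_smooth hv 1) a (b+1) c).continuous
        calc (∫ x in slabFull, (pdIter a b c (divg v) x
                - pdIter (a+1) b c (fun y => v y 0) x
                - pdIter a (b+1) c (fun y => v y 1) x)^2)
            ≤ 3 * (∫ x in slabFull, (pdIter a b c (divg v) x)^2)
              + 3 * (∫ x in slabFull, (pdIter (a+1) b c (fun y => v y 0) x)^2)
              + 3 * (∫ x in slabFull, (pdIter a (b+1) c (fun y => v y 1) x)^2) := hint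
          _ ≤ 3 * R + 3 * (16^c * R) + 3 * (16^c * R) := by
              linarith [hboundD a b c hc1, ih (a+1) b 0 (by omega), ih a (b+1) 1 (by omega)]
          _ ≤ 16^(c+1) * R := by rw [pow_succ]; nlinarith

end HodgeAux4
/-- Hodge-type estimate on the full slab `Ω = 𝕋² × (-1,1)`:
`‖v‖_r² ≲ ‖v‖_{0,r}² + ‖(curl v)_h‖_{r-1}² + ‖div v‖_{r-1}²`. -/
theorem hodge_type_estimate (r : ℕ) (hr : 1 ≤ r) :
    ∃ C : ℝ, 0 < C ∧
      ∀ v : (Fin 3 → ℝ) → Fin 3 → ℝ, ContDiff ℝ (⊤ : ℕ∞) v →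
        (∀ i, HPeriodic fun x => v x i) →
        sobSqVec r slabFull v ≤
          C * (sobAnisoSqVec 0 r slabFull v
            + sobSq (r - 1) slabFull (fun x => curl v x 0)
            + sobSq (r - 1) slabFull (fun x => curl v x 1)
            + sobSq (r - 1) slabFull (divg v)) := by
  refine ⟨3 * (r+1)^3 * 16^r, by positivity, ?_⟩
  intro v hv _
  have hmain := hodge_main r hr v hv
  have hA : 0 ≤ sobAnisoSqVec 0 r slabFull v := sobAnisoSqVec_nonneg _ _ _ _
  have hB : 0 ≤ sobSq (r-1) slabFull (fun x => curl v x 0) := sobSq_nonneg _ _ _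
  have hC : 0 ≤ sobSq (r-1) slabFull (fun x => curl v x 1) := sobSq_nonneg _ _ _
  have hD : 0 ≤ sobSq (r-1) slabFull (divg v) := sobSq_nonneg _ _ _
  set R : ℝ := sobAnisoSqVec 0 r slabFull v
      + sobSq (r - 1) slabFull (fun x => curl v x 0)
      + sobSq (r - 1) slabFull (fun x => curl v x 1)
      + sobSq (r - 1) slabFull (divg v) with hRdef
  have hR : 0 ≤ R := by rw [hRdef]; linarith
  have hterm : ∀ (i : Fin 3), ∀ a b c : ℕ,
      (if a + b + c ≤ r then ∫ x in slabFull, (pdIter a b c (fun x => v x i) x)^2 else 0)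
        ≤ 16^r * R := by
    intro i a b c
    by_cases hcase : a + b + c ≤ r
    · rw [if_pos hcase]
      have h1 : (∫ x in slabFull, (pdIter a b c (fun x => v x i) x)^2) ≤ 16^c * R :=
        hmain c a b i hcase
      have h2 : (16:ℝ)^c ≤ 16^r := by
        apply pow_le_pow_right₀ (by norm_num) (by omega)
      exact le_trans h1 (mul_le_mul_of_nonneg_right h2 hR)
    · rw [if_neg hcase]
      have : (0:ℝ) ≤ (16:ℝ)^r := by positivity
      exact mul_nonneg this hR
  have hcomp : ∀ i : Fin 3,
      sobSq r slabFull (fun x => v x i) ≤ ((r:ℝ)+1)^3 * (16^r * R) := by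
    intro i
    have hle : sobSq r slabFull (fun x => v x i)
        ≤ ∑ _a ∈ Finset.range (r+1), ∑ _b ∈ Finset.range (r+1),
            ∑ _c ∈ Finset.range (r+1), (16:ℝ)^r * R := by
      unfold sobSq
      exact Finset.sum_le_sum fun a _ => Finset.sum_le_sum fun b _ =>
        Finset.sum_le_sum fun c _ => hterm i a b c
    refine le_trans hle (le_of_eq ?_)
    simp only [Finset.sum_const, Finset.card_range, nsmul_eq_mul]
    push_cast
    ring
  calc sobSqVec r slabFull v
      = ∑ i : Fin 3, sobSq r slabFull (fun x => v x i) := rfl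
    _ ≤ ∑ _i : Fin 3, ((r:ℝ)+1)^3 * (16^r * R) := Finset.sum_le_sum fun i _ => hcomp i
    _ = 3 * ((r:ℝ)+1)^3 * 16^r * R := by
        simp only [Finset.sum_const, Finset.card_univ, Fintype.card_fin, nsmul_eq_mul]
        push_cast
        ring
end

section
/- Fractional Sobolev product estimate on the torus 𝕋^d, Fourier-series formulation, high–low case: for every integer d ≥ 1 and all real numbers r, s₁, s₂ with 0 ≤ r ≤ s₁ ≤ s₂ and s₁ > d/2, there exists a constant C > 0 such that for all finitely supported functions f, g : ℤ^d → ℂ, one has ( Σ_{ξ∈ℤ^d} (1+|ξ|²)^r | Σ_{η∈ℤ^d} f(η) g(ξ−η) |² )^{1/2} ≤ C ( Σ_{ξ∈ℤ^d} (1+|ξ|²)^{s₁} |f(ξ)|² )^{1/2} ( Σ_{ξ∈ℤ^d} (1+|ξ|²)^{s₂} |g(ξ)|² )^{1/2}. (This is the estimate ‖fg‖_{H^r(𝕋^d)} ≲ ‖f‖_{H^{s₁}(𝕋^d)} ‖g‖_{H^{s₂}(𝕋^d)} expressed through Fourier coefficients, products of functions corresponding to convolution of their coefficient sequences.) -/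
open Function Pointwise

noncomputable def l2 {ι : Type*} (v : ι → ℝ) : ℝ := Real.sqrt (∑' ξ, v ξ ^ 2)

lemma l2_nonneg {ι : Type*} (v : ι → ℝ) : 0 ≤ l2 v := Real.sqrt_nonneg _

lemma summable_sq {ι : Type*} {v : ι → ℝ} (h : (support v).Finite) :
    Summable (fun ξ => v ξ ^ 2) := by
  apply summable_of_ne_finset_zero (s := h.toFinset)
  intro b hb
  simp only [Set.Finite.mem_toFinset, mem_support, not_not] at hb
  simp [hb]

lemma l2_mono {ι : Type*} {u v : ι → ℝ} (h0 : ∀ ξ, 0 ≤ u ξ) (h : ∀ ξ, u ξ ≤ v ξ)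
    (hv : Summable (fun ξ => v ξ ^ 2)) : l2 u ≤ l2 v := by
  apply Real.sqrt_le_sqrt
  apply Summable.tsum_le_tsum _ _ hv
  · intro ξ; exact pow_le_pow_left₀ (h0 ξ) (h ξ) 2
  · apply Summable.of_nonneg_of_le (fun ξ => sq_nonneg _) _ hv
    intro ξ; exact pow_le_pow_left₀ (h0 ξ) (h ξ) 2

lemma l2_sq {ι : Type*} {v : ι → ℝ} : l2 v ^ 2 = ∑' ξ, v ξ ^ 2 := by
  apply Real.sq_sqrt
  exact tsum_nonneg (fun ξ => sq_nonneg _)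

lemma tsum_eq_sum_of_support {ι : Type*} {v : ι → ℝ} {A : Finset ι}
    (h : ∀ ξ ∉ A, v ξ = 0) : ∑' ξ, v ξ = ∑ ξ ∈ A, v ξ := tsum_eq_sum h

lemma l2_eq_finset {ι : Type*} {v : ι → ℝ} {A : Finset ι} (h : ∀ ξ ∉ A, v ξ = 0) :
    l2 v = Real.sqrt (∑ ξ ∈ A, v ξ ^ 2) := by
  rw [l2, tsum_eq_sum (fun ξ hξ => by rw [h ξ hξ]; ring)]

-- Cauchy-Schwarz for tsums of finitely supported nonneg sequences
lemma tsum_mul_le {ι : Type*} {u v : ι → ℝ} (hu : (support u).Finite)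
    (hv : (support v).Finite) (hu0 : ∀ ξ, 0 ≤ u ξ) (hv0 : ∀ ξ, 0 ≤ v ξ) :
    ∑' ξ, u ξ * v ξ ≤ l2 u * l2 v := by
  classical
  set A := hu.toFinset ∪ hv.toFinset with hA
  have hmemu : ∀ ξ ∉ A, u ξ = 0 := by
    intro ξ hξ; simp only [hA, Finset.mem_union, Set.Finite.mem_toFinset, mem_support,
      not_or, not_not] at hξ; exact hξ.1
  have hmemv : ∀ ξ ∉ A, v ξ = 0 := by
    intro ξ hξ; simp only [hA, Finset.mem_union, Set.Finite.mem_toFinset, mem_support,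
      not_or, not_not] at hξ; exact hξ.2
  rw [tsum_eq_sum (f := fun ξ => u ξ * v ξ) (s := A)
    (fun ξ hξ => by rw [hmemu ξ hξ, zero_mul])]
  rw [l2_eq_finset hmemu, l2_eq_finset hmemv, ← Real.sqrt_mul (by positivity)]
  rw [show (∑ ξ ∈ A, u ξ * v ξ) = Real.sqrt ((∑ ξ ∈ A, u ξ * v ξ) ^ 2) from
    (Real.sqrt_sq (Finset.sum_nonneg fun i _ => mul_nonneg (hu0 i) (hv0 i))).symm]
  exact Real.sqrt_le_sqrt (Finset.sum_mul_sq_le_sq_mul_sq A u v)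


lemma l2_add {ι : Type*} {u v : ι → ℝ} (hu : (support u).Finite)
    (hv : (support v).Finite) (hu0 : ∀ ξ, 0 ≤ u ξ) (hv0 : ∀ ξ, 0 ≤ v ξ) :
    l2 (fun ξ => u ξ + v ξ) ≤ l2 u + l2 v := by
  have hsum : Summable (fun ξ => (u ξ + v ξ) ^ 2) :=
    summable_sq (Set.Finite.subset (hu.union hv) (by
      intro ξ hξ
      simp only [mem_support] at hξ
      by_contra hc
      simp only [Set.mem_union, mem_support, not_or, not_not] at hc
      exact hξ (by rw [hc.1, hc.2, add_zero])))
  have huv : Summable (fun ξ => u ξ * v ξ) := by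
    apply summable_of_ne_finset_zero (s := hu.toFinset)
    intro b hb
    simp only [Set.Finite.mem_toFinset, mem_support, not_not] at hb
    simp [hb]
  have h1 : ∑' ξ, (u ξ + v ξ) ^ 2 ≤ (l2 u + l2 v) ^ 2 := by
    have : ∀ ξ, (u ξ + v ξ) ^ 2 = u ξ ^ 2 + 2 * (u ξ * v ξ) + v ξ ^ 2 := fun ξ => by ring
    rw [tsum_congr this]
    rw [Summable.tsum_add (((summable_sq hu).add (huv.mul_left 2))) (summable_sq hv),
        Summable.tsum_add (summable_sq hu) (huv.mul_left 2), tsum_mul_left]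
    have := tsum_mul_le hu hv hu0 hv0
    have h2 : (l2 u + l2 v) ^ 2 = l2 u ^ 2 + 2 * (l2 u * l2 v) + l2 v ^ 2 := by ring
    rw [h2, l2_sq, l2_sq]
    nlinarith [this]
  calc l2 (fun ξ => u ξ + v ξ) ≤ Real.sqrt ((l2 u + l2 v) ^ 2) := Real.sqrt_le_sqrt h1
    _ = l2 u + l2 v := Real.sqrt_sq (add_nonneg (l2_nonneg u) (l2_nonneg v))

lemma l2_smul {ι : Type*} {v : ι → ℝ} {c : ℝ} (hc : 0 ≤ c) :
    l2 (fun ξ => c * v ξ) = c * l2 v := by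
  unfold l2
  rw [tsum_congr (fun ξ => by rw [mul_pow] : ∀ ξ, (c * v ξ) ^ 2 = c ^ 2 * v ξ ^ 2),
      tsum_mul_left, Real.sqrt_mul (by positivity), Real.sqrt_sq hc]

lemma l2_translate {ι : Type*} [AddCommGroup ι] (v : ι → ℝ) (η : ι) :
    l2 (fun ξ => v (ξ - η)) = l2 v := by
  unfold l2
  congr 1
  exact Equiv.tsum_eq (Equiv.subRight η) (fun ξ => v ξ ^ 2)

lemma l2_finset_sum {ι κ : Type*} (A : Finset κ) (u : κ → ι → ℝ)
    (hfin : ∀ η ∈ A, (support (u η)).Finite) (h0 : ∀ η ∈ A, ∀ ξ, 0 ≤ u η ξ) :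
    l2 (fun ξ => ∑ η ∈ A, u η ξ) ≤ ∑ η ∈ A, l2 (u η) := by
  classical
  induction A using Finset.induction with
  | empty => simp [l2]
  | insert a A' hη ih =>
    rw [Finset.sum_insert hη]
    have step : l2 (fun ξ => u a ξ + ∑ η ∈ A', u η ξ) ≤ l2 (u a) + l2 (fun ξ => ∑ η ∈ A', u η ξ) := by
      apply l2_add (hfin a (Finset.mem_insert_self a A'))
      · apply Set.Finite.subset (Set.Finite.biUnion A'.finite_toSet
          (fun η hη => hfin η (Finset.mem_insert_of_mem hη)))
        intro ξ hξ
        simp only [mem_support] at hξ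
        by_contra hc
        simp only [Set.mem_iUnion, mem_support, not_exists] at hc
        exact hξ (Finset.sum_eq_zero (fun η hη => by
          have := hc η; simp only [not_not] at this; exact this hη))
      · exact fun ξ => h0 a (Finset.mem_insert_self a A') ξ
      · exact fun ξ => Finset.sum_nonneg fun η hη => h0 η (Finset.mem_insert_of_mem hη) ξ
    calc l2 (fun ξ => ∑ η ∈ insert a A', u η ξ)
        = l2 (fun ξ => u a ξ + ∑ η ∈ A', u η ξ) := by
          congr 1; funext ξ; rw [Finset.sum_insert hη]
      _ ≤ l2 (u a) + l2 (fun ξ => ∑ η ∈ A', u η ξ) := step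
      _ ≤ l2 (u a) + ∑ η ∈ A', l2 (u η) := by
          gcongr
          exact ih (fun η hη => hfin η (Finset.mem_insert_of_mem hη))
            (fun η hη => h0 η (Finset.mem_insert_of_mem hη))

lemma young {ι : Type*} [AddCommGroup ι] {a b : ι → ℝ} (A : Finset ι)
    (hb : (support b).Finite) (ha0 : ∀ ξ, 0 ≤ a ξ) (hb0 : ∀ ξ, 0 ≤ b ξ) :
    l2 (fun ξ => ∑ η ∈ A, a η * b (ξ - η)) ≤ (∑ η ∈ A, a η) * l2 b := by
  calc l2 (fun ξ => ∑ η ∈ A, a η * b (ξ - η))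
      ≤ ∑ η ∈ A, l2 (fun ξ => a η * b (ξ - η)) := by
        apply l2_finset_sum
        · intro η _
          apply Set.Finite.subset (hb.image (· + η))
          intro ξ hξ
          simp only [mem_support] at hξ
          have hbne : b (ξ - η) ≠ 0 := fun hc => hξ (by rw [hc, mul_zero])
          exact ⟨ξ - η, hbne, by simp⟩
        · intro η _ ξ; exact mul_nonneg (ha0 η) (hb0 _)
    _ = ∑ η ∈ A, a η * l2 b := by
        apply Finset.sum_congr rfl
        intro η _
        rw [l2_smul (ha0 η), l2_translate]
    _ = (∑ η ∈ A, a η) * l2 b := by rw [Finset.sum_mul]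

lemma summable_int_jb {t : ℝ} (ht : 1 / 2 < t) :
    Summable (fun n : ℤ => (1 + (n : ℝ) ^ 2) ^ (-t)) := by
  have hb : (1 : ℝ) < 2 * t := by linarith
  have h1 : Summable (fun n : ℤ => |(n : ℝ)| ^ (-(2 * t))) := Real.summable_abs_int_rpow hb
  have h2 : Summable (fun n : ℤ => if n = 0 then (1 : ℝ) else 0) := by
    apply summable_of_ne_finset_zero (s := {0})
    intro b hb'; simp only [Finset.mem_singleton] at hb'; simp [hb']
  apply Summable.of_nonneg_of_le (fun n => Real.rpow_nonneg (by positivity) _) _ (h1.add h2)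
  intro n
  rcases eq_or_ne n 0 with hn | hn
  · simp only [hn, if_pos rfl]
    simp only [Int.cast_zero]
    norm_num
    exact Real.rpow_nonneg le_rfl _
  · simp only [if_neg hn, add_zero, Pi.add_apply]
    have h3 : |(n : ℝ)| ^ (-(2 * t)) = ((n : ℝ) ^ 2) ^ (-t) := by
      rw [show (n : ℝ) ^ 2 = |(n : ℝ)| ^ (2 : ℕ) by rw [sq_abs],
        ← Real.rpow_natCast |(n : ℝ)| 2, ← Real.rpow_mul (abs_nonneg _)]
      norm_num
    rw [h3]
    apply Real.rpow_le_rpow_of_nonpos _ (by linarith) (by linarith)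
    have : (n : ℝ) ≠ 0 := Int.cast_ne_zero.mpr hn
    positivity

lemma summable_prod_jb (d : ℕ) {t : ℝ} (ht : 1 / 2 < t) :
    Summable (fun ξ : Fin d → ℤ => ∏ i, (1 + (ξ i : ℝ) ^ 2) ^ (-t)) := by
  induction d with
  | zero =>
    exact summable_of_finite_support (Set.toFinite _)
  | succ n ih =>
    have key : Summable (fun p : ℤ × (Fin n → ℤ) =>
        (1 + (p.1 : ℝ) ^ 2) ^ (-t) * ∏ i, (1 + (p.2 i : ℝ) ^ 2) ^ (-t)) :=
      Summable.mul_of_nonneg (f := fun m : ℤ => (1 + (m : ℝ) ^ 2) ^ (-t))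
        (g := fun ξ : Fin n → ℤ => ∏ i, (1 + (ξ i : ℝ) ^ 2) ^ (-t)) (summable_int_jb ht) ih
        (fun m => Real.rpow_nonneg (by positivity) _)
        (fun ξ => Finset.prod_nonneg fun i _ => Real.rpow_nonneg (by positivity) _)
    apply (Equiv.summable_iff (Fin.consEquiv fun _ : Fin (n+1) => ℤ)).mp
    apply key.congr
    intro p
    simp only [Function.comp, Fin.consEquiv_apply]
    rw [Fin.prod_univ_succ]
    simp [Fin.cons_zero, Fin.cons_succ]

lemma summable_w (d : ℕ) (hd : 1 ≤ d) {s : ℝ} (hs : (d : ℝ) / 2 < s) :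
    Summable (fun ξ : Fin d → ℤ => (1 + ∑ i, (ξ i : ℝ) ^ 2) ^ (-s)) := by
  have hd0 : (0:ℝ) < d := by exact_mod_cast hd
  have ht : 1 / 2 < s / d := by
    rw [div_lt_div_iff₀ (by norm_num) hd0] at *
    nlinarith [hs]
  apply Summable.of_nonneg_of_le (fun ξ => Real.rpow_nonneg (by positivity) _) _
    (summable_prod_jb d ht)
  intro ξ
  have hw : (0:ℝ) < 1 + ∑ i, (ξ i : ℝ) ^ 2 := by positivity
  have hprod : ∏ i, (1 + (ξ i : ℝ) ^ 2) ≤ (1 + ∑ i, (ξ i : ℝ) ^ 2) ^ (d : ℕ) := by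
    calc ∏ i, (1 + (ξ i : ℝ) ^ 2) ≤ ∏ _i : Fin d, (1 + ∑ j, (ξ j : ℝ) ^ 2) := by
          apply Finset.prod_le_prod (fun i _ => by positivity)
          intro i _
          have : (ξ i : ℝ) ^ 2 ≤ ∑ j, (ξ j : ℝ) ^ 2 :=
            Finset.single_le_sum (f := fun j => (ξ j : ℝ)^2) (fun j _ => sq_nonneg _)
              (Finset.mem_univ i)
          linarith
      _ = (1 + ∑ j, (ξ j : ℝ) ^ 2) ^ (d : ℕ) := by
          rw [Finset.prod_const, Finset.card_univ, Fintype.card_fin]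
  have key : (1 + ∑ i, (ξ i : ℝ) ^ 2) ^ (-s) ≤ (∏ i, (1 + (ξ i : ℝ) ^ 2)) ^ (-(s/d)) := by
    have h1 : (∏ i, (1 + (ξ i : ℝ) ^ 2)) ^ (-(s/d)) =
        ((∏ i, (1 + (ξ i : ℝ) ^ 2)) ^ (1/(d:ℝ))) ^ (-s) := by
      rw [← Real.rpow_mul (Finset.prod_nonneg fun i _ => by positivity)]
      congr 1
      field_simp
    rw [h1]
    have hPpos : (0:ℝ) < (∏ i, (1 + (ξ i : ℝ) ^ 2)) ^ (1/(d:ℝ)) := by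
      apply Real.rpow_pos_of_pos
      exact Finset.prod_pos fun i _ => by positivity
    have hsle : -s ≤ 0 := by nlinarith
    refine Real.rpow_le_rpow_of_nonpos hPpos ?_ hsle
    have h2 : (∏ i, (1 + (ξ i : ℝ) ^ 2)) ^ (1/(d:ℝ)) ≤
        ((1 + ∑ j, (ξ j : ℝ) ^ 2) ^ (d:ℕ)) ^ (1/(d:ℝ)) := by
      apply Real.rpow_le_rpow (Finset.prod_nonneg fun i _ => by positivity) hprod
        (by positivity)
    calc (∏ i, (1 + (ξ i : ℝ) ^ 2)) ^ (1/(d:ℝ))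
        ≤ ((1 + ∑ j, (ξ j : ℝ) ^ 2) ^ (d:ℕ)) ^ (1/(d:ℝ)) := h2
      _ = 1 + ∑ j, (ξ j : ℝ) ^ 2 := by
          rw [← Real.rpow_natCast (1 + ∑ j, (ξ j : ℝ) ^ 2) d,
            ← Real.rpow_mul hw.le]
          rw [mul_one_div, div_self (by positivity), Real.rpow_one]
  calc (1 + ∑ i, (ξ i : ℝ) ^ 2) ^ (-s) ≤ (∏ i, (1 + (ξ i : ℝ) ^ 2)) ^ (-(s/d)) := key
    _ = ∏ i, (1 + (ξ i : ℝ) ^ 2) ^ (-(s/d)) := by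
        rw [← Real.finset_prod_rpow _ _ (fun i _ => by positivity)]

noncomputable def wt (d : ℕ) (ξ : Fin d → ℤ) : ℝ := 1 + ∑ i, (ξ i : ℝ) ^ 2

lemma wt_one_le (d : ℕ) (ξ : Fin d → ℤ) : 1 ≤ wt d ξ := by
  unfold wt
  have : (0:ℝ) ≤ ∑ i, (ξ i : ℝ) ^ 2 := Finset.sum_nonneg fun i _ => sq_nonneg _
  linarith

lemma wt_pos (d : ℕ) (ξ : Fin d → ℤ) : 0 < wt d ξ := lt_of_lt_of_le one_pos (wt_one_le d ξ)

lemma sq_rpow_half {x t : ℝ} (hx : 0 ≤ x) : (x ^ (t / 2)) ^ (2:ℕ) = x ^ t := by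
  rw [← Real.rpow_natCast (x ^ (t/2)) 2, ← Real.rpow_mul hx]
  norm_num

lemma peetre {d : ℕ} {s : ℝ} (hs : 0 ≤ s) (ξ η : Fin d → ℤ) :
    wt d ξ ^ (s / 2) ≤ 2 ^ s * (wt d η ^ (s / 2) + wt d (ξ - η) ^ (s / 2)) := by
  have hkey : wt d ξ ≤ 2 * wt d η + 2 * wt d (ξ - η) := by
    unfold wt
    have hterm : ∀ i, (ξ i : ℝ) ^ 2 ≤ 2 * (η i : ℝ) ^ 2 + 2 * ((ξ - η) i : ℝ) ^ 2 := by
      intro i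
      have : ((ξ - η) i : ℝ) = (ξ i : ℝ) - (η i : ℝ) := by
        simp [Pi.sub_apply]
      rw [this]
      nlinarith [sq_nonneg ((ξ i : ℝ) - 2 * (η i : ℝ) + ((ξ i : ℝ) - (η i : ℝ))), sq_nonneg ((η i:ℝ) - ((ξ i:ℝ) - (η i:ℝ)))]
    have hsum : ∑ i, (ξ i : ℝ) ^ 2 ≤ ∑ i, (2 * (η i : ℝ) ^ 2 + 2 * ((ξ - η) i : ℝ) ^ 2) :=
      Finset.sum_le_sum fun i _ => hterm i
    rw [Finset.sum_add_distrib, ← Finset.mul_sum, ← Finset.mul_sum] at hsum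
    linarith
  have h4 : (4:ℝ) ^ (s/2) = 2 ^ s := by
    rw [show (4:ℝ) = 2 ^ (2:ℕ) by norm_num, ← Real.rpow_natCast (2:ℝ) 2,
      ← Real.rpow_mul (by norm_num)]
    norm_num
    rw [show 2 * (s/2) = s by ring]
  rcases le_total (wt d η) (wt d (ξ - η)) with hc | hc
  · have h1 : wt d ξ ≤ 4 * wt d (ξ - η) := by linarith
    calc wt d ξ ^ (s/2) ≤ (4 * wt d (ξ - η)) ^ (s/2) :=
          Real.rpow_le_rpow (wt_pos d ξ).le h1 (by linarith)
      _ = 4 ^ (s/2) * wt d (ξ - η) ^ (s/2) :=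
          Real.mul_rpow (by norm_num) (wt_pos d _).le
      _ = 2 ^ s * wt d (ξ - η) ^ (s/2) := by rw [h4]
      _ ≤ 2 ^ s * (wt d η ^ (s/2) + wt d (ξ - η) ^ (s/2)) := by
          have h2 : (0:ℝ) ≤ wt d η ^ (s/2) := Real.rpow_nonneg (wt_pos d _).le _
          have h3 : (0:ℝ) < (2:ℝ) ^ s := Real.rpow_pos_of_pos (by norm_num) s
          nlinarith
  · have h1 : wt d ξ ≤ 4 * wt d η := by linarith
    calc wt d ξ ^ (s/2) ≤ (4 * wt d η) ^ (s/2) :=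
          Real.rpow_le_rpow (wt_pos d ξ).le h1 (by linarith)
      _ = 4 ^ (s/2) * wt d η ^ (s/2) :=
          Real.mul_rpow (by norm_num) (wt_pos d _).le
      _ = 2 ^ s * wt d η ^ (s/2) := by rw [h4]
      _ ≤ 2 ^ s * (wt d η ^ (s/2) + wt d (ξ - η) ^ (s/2)) := by
          have h2 : (0:ℝ) ≤ wt d (ξ - η) ^ (s/2) := Real.rpow_nonneg (wt_pos d _).le _
          have h3 : (0:ℝ) < (2:ℝ) ^ s := Real.rpow_pos_of_pos (by norm_num) s
          nlinarith

lemma l1_bound {d : ℕ} {s : ℝ} (hK : Summable (fun ξ : Fin d → ℤ => wt d ξ ^ (-s)))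
    (u : (Fin d → ℤ) → ℝ) (hu0 : ∀ ξ, 0 ≤ u ξ) (A : Finset (Fin d → ℤ))
    (hsupp : ∀ ξ ∉ A, u ξ = 0) :
    ∑ η ∈ A, u η ≤ Real.sqrt (∑' ξ, wt d ξ ^ (-s)) * l2 (fun ξ => wt d ξ ^ (s/2) * u ξ) := by
  have hterm : ∀ η, u η = wt d η ^ (-s/2) * (wt d η ^ (s/2) * u η) := by
    intro η
    rw [← mul_assoc, ← Real.rpow_add (wt_pos d η)]
    rw [show -s/2 + s/2 = 0 by ring, Real.rpow_zero, one_mul]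
  have hCS : (∑ η ∈ A, wt d η ^ (-s/2) * (wt d η ^ (s/2) * u η)) ^ 2 ≤
      (∑ η ∈ A, (wt d η ^ (-s/2)) ^ 2) * ∑ η ∈ A, (wt d η ^ (s/2) * u η) ^ 2 :=
    Finset.sum_mul_sq_le_sq_mul_sq A _ _
  have ha2 : ∀ η, (wt d η ^ (-s/2)) ^ (2:ℕ) = wt d η ^ (-s) := fun η => by
    rw [show (-s/2) = (-s)/2 by ring]; exact sq_rpow_half (wt_pos d η).le
  have hsumA : ∑ η ∈ A, (wt d η ^ (-s/2)) ^ 2 ≤ ∑' ξ, wt d ξ ^ (-s) := by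
    rw [Finset.sum_congr rfl (fun η _ => ha2 η)]
    exact hK.sum_le_tsum A (fun ξ _ => Real.rpow_nonneg (wt_pos d ξ).le _)
  have hL2 : l2 (fun ξ => wt d ξ ^ (s/2) * u ξ) =
      Real.sqrt (∑ η ∈ A, (wt d η ^ (s/2) * u η) ^ 2) := by
    apply l2_eq_finset
    intro ξ hξ
    rw [hsupp ξ hξ, mul_zero]
  have hnn : 0 ≤ ∑ η ∈ A, u η := Finset.sum_nonneg fun η _ => hu0 η
  calc ∑ η ∈ A, u η
      = Real.sqrt ((∑ η ∈ A, wt d η ^ (-s/2) * (wt d η ^ (s/2) * u η)) ^ 2) := by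
        rw [← Finset.sum_congr rfl (fun η _ => hterm η)]
        exact (Real.sqrt_sq hnn).symm
    _ ≤ Real.sqrt ((∑ η ∈ A, (wt d η ^ (-s/2)) ^ 2) * ∑ η ∈ A, (wt d η ^ (s/2) * u η) ^ 2) :=
        Real.sqrt_le_sqrt hCS
    _ = Real.sqrt (∑ η ∈ A, (wt d η ^ (-s/2)) ^ 2) *
        Real.sqrt (∑ η ∈ A, (wt d η ^ (s/2) * u η) ^ 2) :=
        Real.sqrt_mul (Finset.sum_nonneg fun η _ => sq_nonneg _) _
    _ ≤ Real.sqrt (∑' ξ, wt d ξ ^ (-s)) * l2 (fun ξ => wt d ξ ^ (s/2) * u ξ) := by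
        rw [hL2]
        apply mul_le_mul_of_nonneg_right (Real.sqrt_le_sqrt hsumA) (Real.sqrt_nonneg _)

/-- Fractional Sobolev product estimate on `𝕋^d` in Fourier-series form,
high–low case: for `0 ≤ r ≤ s₁ ≤ s₂` with `s₁ > d/2`,
`‖fg‖_{H^r} ≲ ‖f‖_{H^{s₁}} ‖g‖_{H^{s₂}}`, products corresponding to convolution of the
(finitely supported) Fourier coefficient sequences. -/
theorem torus_product_high_low (d : ℕ) (hd : 1 ≤ d) (r s₁ s₂ : ℝ)
    (h0 : 0 ≤ r) (h1 : r ≤ s₁) (h2 : s₁ ≤ s₂) (h3 : (d : ℝ) / 2 < s₁) :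
    ∃ C : ℝ, 0 < C ∧
      ∀ f g : (Fin d → ℤ) → ℂ,
        (Function.support f).Finite → (Function.support g).Finite →
        Real.sqrt (∑' ξ : Fin d → ℤ,
            (1 + ∑ i, ((ξ i : ℝ)) ^ 2) ^ r * ‖∑' η : Fin d → ℤ, f η * g (ξ - η)‖ ^ 2) ≤
          C * Real.sqrt (∑' ξ : Fin d → ℤ, (1 + ∑ i, ((ξ i : ℝ)) ^ 2) ^ s₁ * ‖f ξ‖ ^ 2)
            * Real.sqrt (∑' ξ : Fin d → ℤ, (1 + ∑ i, ((ξ i : ℝ)) ^ 2) ^ s₂ * ‖g ξ‖ ^ 2) := by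
  classical
  have hdpos : (0:ℝ) < d := by exact_mod_cast hd
  have hs1pos : 0 < s₁ := lt_trans (by positivity) h3
  have hK : Summable (fun ξ : Fin d → ℤ => wt d ξ ^ (-s₁)) := summable_w d hd h3
  set K : ℝ := ∑' ξ : Fin d → ℤ, wt d ξ ^ (-s₁) with hKdef
  have hKnn : 0 ≤ Real.sqrt K := Real.sqrt_nonneg _
  refine ⟨2 ^ s₁ * 2 * (Real.sqrt K + 1), by positivity, ?_⟩
  intro f g hf hg
  set A : Finset (Fin d → ℤ) := hf.toFinset with hA
  set B : Finset (Fin d → ℤ) := hg.toFinset with hB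
  have hfz : ∀ η ∉ A, f η = 0 := by
    intro η hη
    simp only [hA, Set.Finite.mem_toFinset, Function.mem_support, not_not] at hη
    exact hη
  have hgz : ∀ σ ∉ B, g σ = 0 := by
    intro σ hσ
    simp only [hB, Set.Finite.mem_toFinset, Function.mem_support, not_not] at hσ
    exact hσ
  set h : (Fin d → ℤ) → ℂ := fun ξ => ∑' η, f η * g (ξ - η) with hh
  have hhA : ∀ ξ, h ξ = ∑ η ∈ A, f η * g (ξ - η) := by
    intro ξ
    apply tsum_eq_sum
    intro η hη
    rw [hfz η hη, zero_mul]
  have hhz : ∀ ξ ∉ A + B, h ξ = 0 := by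
    intro ξ hξ
    rw [hhA]
    apply Finset.sum_eq_zero
    intro η hη
    rcases eq_or_ne (g (ξ - η)) 0 with hgz' | hgz'
    · rw [hgz', mul_zero]
    · exfalso
      apply hξ
      have hmem : ξ - η ∈ B := by
        simp only [hB, Set.Finite.mem_toFinset, Function.mem_support]
        exact hgz'
      have := Finset.add_mem_add hη hmem
      simpa using this
  -- real sequences
  set F : (Fin d → ℤ) → ℝ := fun ξ => wt d ξ ^ (s₁/2) * ‖f ξ‖ with hF
  set F0 : (Fin d → ℤ) → ℝ := fun ξ => ‖f ξ‖ with hF0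
  set G : (Fin d → ℤ) → ℝ := fun ξ => wt d ξ ^ (s₁/2) * ‖g ξ‖ with hG
  set G2 : (Fin d → ℤ) → ℝ := fun ξ => wt d ξ ^ (s₂/2) * ‖g ξ‖ with hG2
  set G0 : (Fin d → ℤ) → ℝ := fun ξ => ‖g ξ‖ with hG0
  set Hr : (Fin d → ℤ) → ℝ := fun ξ => wt d ξ ^ (r/2) * ‖h ξ‖ with hHr
  set Hs : (Fin d → ℤ) → ℝ := fun ξ => wt d ξ ^ (s₁/2) * ‖h ξ‖ with hHs
  set P : (Fin d → ℤ) → ℝ := fun ξ => ∑ η ∈ A, F η * G0 (ξ - η) with hP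
  set Q : (Fin d → ℤ) → ℝ := fun ξ => ∑ η ∈ A, F0 η * G (ξ - η) with hQ
  have hFnn : ∀ ξ, 0 ≤ F ξ := fun ξ => mul_nonneg (Real.rpow_nonneg (wt_pos d ξ).le _) (norm_nonneg _)
  have hF0nn : ∀ ξ, 0 ≤ F0 ξ := fun ξ => norm_nonneg _
  have hGnn : ∀ ξ, 0 ≤ G ξ := fun ξ => mul_nonneg (Real.rpow_nonneg (wt_pos d ξ).le _) (norm_nonneg _)
  have hG2nn : ∀ ξ, 0 ≤ G2 ξ := fun ξ => mul_nonneg (Real.rpow_nonneg (wt_pos d ξ).le _) (norm_nonneg _)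
  have hG0nn : ∀ ξ, 0 ≤ G0 ξ := fun ξ => norm_nonneg _
  have hHrnn : ∀ ξ, 0 ≤ Hr ξ := fun ξ => mul_nonneg (Real.rpow_nonneg (wt_pos d ξ).le _) (norm_nonneg _)
  have hHsnn : ∀ ξ, 0 ≤ Hs ξ := fun ξ => mul_nonneg (Real.rpow_nonneg (wt_pos d ξ).le _) (norm_nonneg _)
  have hPnn : ∀ ξ, 0 ≤ P ξ := fun ξ => Finset.sum_nonneg fun η _ => mul_nonneg (hFnn η) (hG0nn _)
  have hQnn : ∀ ξ, 0 ≤ Q ξ := fun ξ => Finset.sum_nonneg fun η _ => mul_nonneg (hF0nn η) (hGnn _)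
  have hFz : ∀ ξ ∉ A, F ξ = 0 := fun ξ hξ => by rw [hF]; simp only []; rw [hfz ξ hξ]; simp
  have hF0z : ∀ ξ ∉ A, F0 ξ = 0 := fun ξ hξ => by rw [hF0]; simp only []; rw [hfz ξ hξ]; simp
  have hGz : ∀ ξ ∉ B, G ξ = 0 := fun ξ hξ => by rw [hG]; simp only []; rw [hgz ξ hξ]; simp
  have hG2z : ∀ ξ ∉ B, G2 ξ = 0 := fun ξ hξ => by rw [hG2]; simp only []; rw [hgz ξ hξ]; simp
  have hG0z : ∀ ξ ∉ B, G0 ξ = 0 := fun ξ hξ => by rw [hG0]; simp only []; rw [hgz ξ hξ]; simp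
  have hFfin : (Function.support F).Finite :=
    Set.Finite.subset A.finite_toSet (fun ξ hξ => by
      by_contra hc; exact (Function.mem_support.mp hξ) (hFz ξ hc))
  have hGfin : (Function.support G).Finite :=
    Set.Finite.subset B.finite_toSet (fun ξ hξ => by
      by_contra hc; exact (Function.mem_support.mp hξ) (hGz ξ hc))
  have hG2fin : (Function.support G2).Finite :=
    Set.Finite.subset B.finite_toSet (fun ξ hξ => by
      by_contra hc; exact (Function.mem_support.mp hξ) (hG2z ξ hc))
  have hHsfin : (Function.support Hs).Finite :=
    Set.Finite.subset (A + B).finite_toSet (fun ξ hξ => by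
      by_contra hc
      apply Function.mem_support.mp hξ
      rw [hHs]; simp only []; rw [hhz ξ hc]; simp)
  have hPz : ∀ ξ ∉ A + B, P ξ = 0 := by
    intro ξ hξ
    apply Finset.sum_eq_zero
    intro η hη
    rcases eq_or_ne (G0 (ξ - η)) 0 with hc | hc
    · rw [hc, mul_zero]
    · exfalso
      apply hξ
      have hmem : ξ - η ∈ B := by
        by_contra hc2
        exact hc (hG0z _ hc2)
      have := Finset.add_mem_add hη hmem
      simpa using this
  have hQz : ∀ ξ ∉ A + B, Q ξ = 0 := by
    intro ξ hξ
    apply Finset.sum_eq_zero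
    intro η hη
    rcases eq_or_ne (G (ξ - η)) 0 with hc | hc
    · rw [hc, mul_zero]
    · exfalso
      apply hξ
      have hmem : ξ - η ∈ B := by
        by_contra hc2
        exact hc (hGz _ hc2)
      have := Finset.add_mem_add hη hmem
      simpa using this
  have hPQfin : (Function.support (fun ξ => 2 ^ s₁ * (P ξ + Q ξ))).Finite :=
    Set.Finite.subset (A + B).finite_toSet (fun ξ hξ => by
      by_contra hc
      apply Function.mem_support.mp hξ
      rw [hPz ξ hc, hQz ξ hc]; simp)
  -- step 0 : LHS = l2 Hr
  have hLHS : Real.sqrt (∑' ξ : Fin d → ℤ,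
      (1 + ∑ i, ((ξ i : ℝ)) ^ 2) ^ r * ‖∑' η : Fin d → ℤ, f η * g (ξ - η)‖ ^ 2) = l2 Hr := by
    unfold l2
    congr 1
    apply tsum_congr
    intro ξ
    rw [hHr]
    simp only []
    rw [mul_pow, sq_rpow_half (wt_pos d ξ).le]
    rfl
  have hRf : Real.sqrt (∑' ξ : Fin d → ℤ, (1 + ∑ i, ((ξ i : ℝ)) ^ 2) ^ s₁ * ‖f ξ‖ ^ 2) = l2 F := by
    unfold l2
    congr 1
    apply tsum_congr
    intro ξ
    rw [hF]
    simp only []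
    rw [mul_pow, sq_rpow_half (wt_pos d ξ).le]
    rfl
  have hRg : Real.sqrt (∑' ξ : Fin d → ℤ, (1 + ∑ i, ((ξ i : ℝ)) ^ 2) ^ s₂ * ‖g ξ‖ ^ 2) = l2 G2 := by
    unfold l2
    congr 1
    apply tsum_congr
    intro ξ
    rw [hG2]
    simp only []
    rw [mul_pow, sq_rpow_half (wt_pos d ξ).le]
    rfl
  rw [hLHS, hRf, hRg]
  -- step 1 : l2 Hr ≤ l2 Hs
  have step1 : l2 Hr ≤ l2 Hs := by
    apply l2_mono hHrnn _ (summable_sq hHsfin)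
    intro ξ
    rw [hHr, hHs]
    simp only []
    apply mul_le_mul_of_nonneg_right _ (norm_nonneg _)
    apply Real.rpow_le_rpow_of_exponent_le (wt_one_le d ξ)
    linarith
  -- step 2 : pointwise Hs ≤ 2^s₁ (P + Q)
  have step2 : l2 Hs ≤ l2 (fun ξ => 2 ^ s₁ * (P ξ + Q ξ)) := by
    apply l2_mono hHsnn _ (summable_sq hPQfin)
    intro ξ
    have hb1 : ‖h ξ‖ ≤ ∑ η ∈ A, ‖f η‖ * ‖g (ξ - η)‖ := by
      rw [hhA ξ]
      refine (norm_sum_le _ _).trans ?_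
      apply le_of_eq
      apply Finset.sum_congr rfl
      intro η _
      rw [norm_mul]
    have hb2 : Hs ξ ≤ ∑ η ∈ A, wt d ξ ^ (s₁/2) * (‖f η‖ * ‖g (ξ - η)‖) := by
      rw [← Finset.mul_sum, hHs]
      exact mul_le_mul_of_nonneg_left hb1 (Real.rpow_nonneg (wt_pos d ξ).le _)
    have hb3 : ∀ η ∈ A, wt d ξ ^ (s₁/2) * (‖f η‖ * ‖g (ξ - η)‖) ≤
        2 ^ s₁ * (F η * G0 (ξ - η) + F0 η * G (ξ - η)) := by
      intro η _
      have hpe := peetre (s := s₁) hs1pos.le ξ η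
      have hnn2 : (0:ℝ) ≤ ‖f η‖ * ‖g (ξ - η)‖ := by positivity
      calc wt d ξ ^ (s₁/2) * (‖f η‖ * ‖g (ξ - η)‖)
          ≤ (2 ^ s₁ * (wt d η ^ (s₁/2) + wt d (ξ - η) ^ (s₁/2))) * (‖f η‖ * ‖g (ξ - η)‖) :=
            mul_le_mul_of_nonneg_right hpe hnn2
        _ = 2 ^ s₁ * (F η * G0 (ξ - η) + F0 η * G (ξ - η)) := by
            rw [hF, hF0, hG, hG0]
            simp only []
            ring
    calc Hs ξ ≤ ∑ η ∈ A, wt d ξ ^ (s₁/2) * (‖f η‖ * ‖g (ξ - η)‖) := hb2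
      _ ≤ ∑ η ∈ A, 2 ^ s₁ * (F η * G0 (ξ - η) + F0 η * G (ξ - η)) := Finset.sum_le_sum hb3
      _ = 2 ^ s₁ * (P ξ + Q ξ) := by
          rw [← Finset.mul_sum, Finset.sum_add_distrib, hP, hQ]
  -- step 3+4
  have step3 : l2 (fun ξ => 2 ^ s₁ * (P ξ + Q ξ)) = 2 ^ s₁ * l2 (fun ξ => P ξ + Q ξ) :=
    l2_smul (Real.rpow_nonneg (by norm_num) _)
  have hPfin : (Function.support P).Finite :=
    Set.Finite.subset (A + B).finite_toSet (fun ξ hξ => by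
      by_contra hc; exact (Function.mem_support.mp hξ) (hPz ξ hc))
  have hQfin : (Function.support Q).Finite :=
    Set.Finite.subset (A + B).finite_toSet (fun ξ hξ => by
      by_contra hc; exact (Function.mem_support.mp hξ) (hQz ξ hc))
  have step4 : l2 (fun ξ => P ξ + Q ξ) ≤ l2 P + l2 Q := l2_add hPfin hQfin hPnn hQnn
  -- step 5 : commute P and Young
  have hPcomm : P = fun ξ => ∑ σ ∈ B, G0 σ * F (ξ - σ) := by
    funext ξ
    rw [hP]
    simp only []
    have e1 : ∑ η ∈ A, F η * G0 (ξ - η) = ∑' η, F η * G0 (ξ - η) :=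
      (tsum_eq_sum (fun η hη => by rw [hFz η hη, zero_mul])).symm
    have e2 : ∑' η, F η * G0 (ξ - η) = ∑' σ, G0 σ * F (ξ - σ) := by
      rw [← Equiv.tsum_eq (Equiv.subLeft ξ) (fun σ => G0 σ * F (ξ - σ))]
      apply tsum_congr
      intro η
      simp only [Equiv.subLeft_apply, sub_sub_cancel]
      ring
    have e3 : ∑' σ, G0 σ * F (ξ - σ) = ∑ σ ∈ B, G0 σ * F (ξ - σ) :=
      tsum_eq_sum (fun σ hσ => by rw [hG0z σ hσ, zero_mul])
    rw [e1, e2, e3]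
  have step5 : l2 P ≤ (∑ σ ∈ B, G0 σ) * l2 F := by
    rw [hPcomm]
    exact young B hFfin hG0nn hFnn
  have step6 : l2 Q ≤ (∑ η ∈ A, F0 η) * l2 G := young A hGfin hF0nn hGnn
  -- l1 bounds
  have step7 : ∑ σ ∈ B, G0 σ ≤ Real.sqrt K * l2 G := by
    have := l1_bound hK (fun ξ => ‖g ξ‖) (fun ξ => norm_nonneg _) B
      (fun ξ hξ => hG0z ξ hξ)
    exact this
  have step8 : ∑ η ∈ A, F0 η ≤ Real.sqrt K * l2 F := by
    have := l1_bound hK (fun ξ => ‖f ξ‖) (fun ξ => norm_nonneg _) A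
      (fun ξ hξ => hF0z ξ hξ)
    exact this
  -- step 9 : l2 G ≤ l2 G2
  have step9 : l2 G ≤ l2 G2 := by
    apply l2_mono hGnn _ (summable_sq hG2fin)
    intro ξ
    rw [hG, hG2]
    simp only []
    apply mul_le_mul_of_nonneg_right _ (norm_nonneg _)
    apply Real.rpow_le_rpow_of_exponent_le (wt_one_le d ξ)
    linarith
  -- assemble
  have hx : 0 ≤ l2 F := l2_nonneg F
  have hy : 0 ≤ l2 G2 := l2_nonneg G2
  have hyG : 0 ≤ l2 G := l2_nonneg G
  have h2s : (0:ℝ) < 2 ^ s₁ := Real.rpow_pos_of_pos (by norm_num) _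
  have hP' : l2 P ≤ Real.sqrt K * l2 F * l2 G2 := by
    have t1 : (∑ σ ∈ B, G0 σ) ≤ Real.sqrt K * l2 G2 :=
      step7.trans (mul_le_mul_of_nonneg_left step9 hKnn)
    have t2 : (∑ σ ∈ B, G0 σ) * l2 F ≤ (Real.sqrt K * l2 G2) * l2 F :=
      mul_le_mul_of_nonneg_right t1 hx
    exact step5.trans (t2.trans_eq (by ring))
  have hQ' : l2 Q ≤ Real.sqrt K * l2 F * l2 G2 := by
    have t1 : (∑ η ∈ A, F0 η) * l2 G ≤ (Real.sqrt K * l2 F) * l2 G2 :=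
      mul_le_mul step8 step9 hyG (mul_nonneg hKnn hx)
    exact step6.trans t1
  calc l2 Hr ≤ l2 Hs := step1
    _ ≤ l2 (fun ξ => 2 ^ s₁ * (P ξ + Q ξ)) := step2
    _ = 2 ^ s₁ * l2 (fun ξ => P ξ + Q ξ) := step3
    _ ≤ 2 ^ s₁ * (l2 P + l2 Q) := mul_le_mul_of_nonneg_left step4 h2s.le
    _ ≤ 2 ^ s₁ * (Real.sqrt K * l2 F * l2 G2 + Real.sqrt K * l2 F * l2 G2) := by
        apply mul_le_mul_of_nonneg_left (add_le_add hP' hQ') h2s.le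
    _ ≤ 2 ^ s₁ * 2 * (Real.sqrt K + 1) * l2 F * l2 G2 := by
        nlinarith [mul_nonneg hx hy, mul_nonneg (mul_nonneg hKnn hx) hy]
end

section
/- Fractional Sobolev product estimate on the torus 𝕋^d, Fourier-series formulation, low–high case: for every integer d ≥ 1 and all real numbers r, s₁, s₂ with 0 ≤ r ≤ s₁ ≤ s₂ and s₂ > r + d/2, there exists a constant C > 0 such that for all finitely supported functions f, g : ℤ^d → ℂ, one has ( Σ_{ξ∈ℤ^d} (1+|ξ|²)^r | Σ_{η∈ℤ^d} f(η) g(ξ−η) |² )^{1/2} ≤ C ( Σ_{ξ∈ℤ^d} (1+|ξ|²)^{s₁} |f(ξ)|² )^{1/2} ( Σ_{ξ∈ℤ^d} (1+|ξ|²)^{s₂} |g(ξ)|² )^{1/2}. (This is the estimate ‖fg‖_{H^r(𝕋^d)} ≲ ‖f‖_{H^{s₁}(𝕋^d)} ‖g‖_{H^{s₂}(𝕋^d)} expressed through Fourier coefficients, products of functions corresponding to convolution of their coefficient sequences.) -/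
lemma aux_sum1d {b : ℝ} (hb : 1/2 < b) :
    Summable fun n : ℤ => ((1:ℝ) + (n:ℝ)^2) ^ (-b) := by
  have hb0 : 0 < b := by linarith
  have h2b : 1 < 2 * b := by linarith
  have hbase : Summable fun n : ℤ => |(n:ℝ)| ^ (-(2*b)) := Real.summable_abs_int_rpow h2b
  have hind : Summable fun n : ℤ => if n = 0 then (1:ℝ) else 0 :=
    summable_of_ne_finset_zero (s := {0})
      (by intro n hn; simp only [Finset.mem_singleton] at hn; simp [hn])
  refine Summable.of_nonneg_of_le (fun n => Real.rpow_nonneg (by positivity) _)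
    (fun n => ?_) (hbase.add hind)
  by_cases hn : n = 0
  · subst hn
    simp [Real.zero_rpow (by linarith : -(2*b) ≠ 0)]
  · have hcast : ((n:ℝ)) ≠ 0 := Int.cast_ne_zero.mpr hn
    have hsq : (0:ℝ) < (n:ℝ)^2 := by positivity
    have step1 : ((1:ℝ) + (n:ℝ)^2) ^ (-b) ≤ ((n:ℝ)^2) ^ (-b) :=
      Real.rpow_le_rpow_of_nonpos hsq (by linarith) (by linarith)
    have step2 : ((n:ℝ)^2) ^ (-b) = |(n:ℝ)| ^ (-(2*b)) := by
      rw [← sq_abs, ← Real.rpow_natCast |(n:ℝ)| 2, ← Real.rpow_mul (abs_nonneg _)]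
      norm_num
    calc ((1:ℝ) + (n:ℝ)^2) ^ (-b) ≤ |(n:ℝ)| ^ (-(2*b)) := step2 ▸ step1
      _ ≤ |(n:ℝ)| ^ (-(2*b)) + (if n = 0 then (1:ℝ) else 0) := by simp [hn]

lemma aux_prod_summable {f : ℤ → ℝ} (hf : Summable f) (h0 : ∀ n, 0 ≤ f n) (d : ℕ) :
    Summable fun ξ : Fin d → ℤ => ∏ i, f (ξ i) := by
  induction d with
  | zero =>
      have : (fun ξ : Fin 0 → ℤ => ∏ i, f (ξ i)) = fun _ => 1 := by
        funext ξ; simp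
      rw [this]
      exact summable_of_finite_support (Set.toFinite _)
  | succ n ih =>
      have hP : Summable fun p : ℤ × (Fin n → ℤ) => f p.1 * ∏ i, f (p.2 i) := by
        apply Summable.mul_of_nonneg hf ih
        · exact Pi.le_def.mpr h0
        · exact Pi.le_def.mpr fun ξ => Finset.prod_nonneg fun i _ => h0 _
      have := ((Fin.consEquiv fun _ : Fin (n+1) => ℤ).symm.summable_iff
        (f := fun p : ℤ × (Fin n → ℤ) => f p.1 * ∏ i, f (p.2 i))).mpr hP
      refine this.congr fun ξ => ?_
      simp [Fin.consEquiv, Fin.prod_univ_succ, Fin.tail]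

lemma aux_sum_d (d : ℕ) (hd : 1 ≤ d) {t : ℝ} (ht : (d:ℝ)/2 < t) :
    Summable fun ξ : Fin d → ℤ => (1 + ∑ i, ((ξ i : ℝ))^2) ^ (-t) := by
  have hd0 : (0:ℝ) < d := by exact_mod_cast hd
  set b : ℝ := t / d with hbdef
  have hb : 1/2 < b := by
    rw [hbdef, lt_div_iff₀ hd0]
    linarith [ht]
  have hb0 : 0 < b := by linarith
  have h1d : Summable fun n : ℤ => ((1:ℝ) + (n:ℝ)^2) ^ (-b) := aux_sum1d hb
  have hprod := aux_prod_summable h1d (fun n => Real.rpow_nonneg (by positivity) _) d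
  refine Summable.of_nonneg_of_le (fun ξ => Real.rpow_nonneg (by positivity) _)
    (fun ξ => ?_) hprod
  set Q : ℝ := 1 + ∑ i, ((ξ i : ℝ))^2 with hQdef
  have hQ1 : (1:ℝ) ≤ Q := by
    have : (0:ℝ) ≤ ∑ i, ((ξ i : ℝ))^2 := Finset.sum_nonneg fun i _ => sq_nonneg _
    linarith
  have hQ0 : (0:ℝ) < Q := by linarith
  -- each factor ≤ Q
  have hfac : ∀ i : Fin d, (1:ℝ) + ((ξ i : ℝ))^2 ≤ Q := by
    intro i
    rw [hQdef]
    have h := Finset.single_le_sum (f := fun j => ((ξ j : ℝ))^2)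
      (fun j _ => sq_nonneg _) (Finset.mem_univ i)
    linarith
  have hPpos : (0:ℝ) < ∏ i : Fin d, ((1:ℝ) + ((ξ i : ℝ))^2) :=
    Finset.prod_pos fun i _ => by positivity
  have hPQ : (∏ i : Fin d, ((1:ℝ) + ((ξ i : ℝ))^2)) ≤ Q ^ (d:ℕ) := by
    calc (∏ i : Fin d, ((1:ℝ) + ((ξ i : ℝ))^2)) ≤ ∏ _i : Fin d, Q :=
          Finset.prod_le_prod (fun i _ => by positivity) (fun i _ => hfac i)
      _ = Q ^ (d:ℕ) := by simp [Finset.prod_const]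
  have key : Q ^ (-t) ≤ (∏ i : Fin d, ((1:ℝ) + ((ξ i : ℝ))^2)) ^ (-b) := by
    have h1 : (Q ^ (d:ℕ)) ^ (-b) ≤ (∏ i : Fin d, ((1:ℝ) + ((ξ i : ℝ))^2)) ^ (-b) :=
      Real.rpow_le_rpow_of_nonpos hPpos hPQ (by linarith)
    have h2 : (Q ^ (d:ℕ)) ^ (-b) = Q ^ (-t) := by
      rw [← Real.rpow_natCast Q d, ← Real.rpow_mul hQ0.le]
      congr 1
      rw [hbdef]
      field_simp
    rw [← h2]; exact h1
  calc Q ^ (-t) ≤ (∏ i : Fin d, ((1:ℝ) + ((ξ i : ℝ))^2)) ^ (-b) := key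
    _ = ∏ i : Fin d, ((1:ℝ) + ((ξ i : ℝ))^2) ^ (-b) :=
        (Real.finset_prod_rpow _ _ (fun i _ => by positivity) _).symm


noncomputable def auxQ (d : ℕ) (ξ : Fin d → ℤ) : ℝ := 1 + ∑ i, ((ξ i : ℝ))^2

lemma auxQ_one_le (d : ℕ) (ξ : Fin d → ℤ) : (1:ℝ) ≤ auxQ d ξ := by
  have : (0:ℝ) ≤ ∑ i, ((ξ i : ℝ))^2 := Finset.sum_nonneg fun i _ => sq_nonneg _
  simp only [auxQ]; linarith

lemma auxQ_pos (d : ℕ) (ξ : Fin d → ℤ) : (0:ℝ) < auxQ d ξ :=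
  lt_of_lt_of_le one_pos (auxQ_one_le d ξ)

lemma auxQ_peetre (d : ℕ) (ξ η : Fin d → ℤ) :
    auxQ d ξ ≤ 2 * auxQ d η * auxQ d (ξ - η) := by
  have hsum : ∑ i, ((ξ i : ℝ))^2 ≤
      ∑ i, (2 * ((η i : ℝ))^2 + 2 * (((ξ - η) i : ℝ))^2) := by
    refine Finset.sum_le_sum fun i _ => ?_
    have hcast : (((ξ - η) i : ℤ) : ℝ) = (ξ i : ℝ) - (η i : ℝ) := by
      simp [Pi.sub_apply]
    rw [hcast]
    nlinarith [sq_nonneg ((ξ i : ℝ) - 2 * (η i : ℝ))]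
  rw [Finset.sum_add_distrib] at hsum
  simp only [← Finset.mul_sum] at hsum
  have hA : (0:ℝ) ≤ ∑ i, ((η i : ℝ))^2 := Finset.sum_nonneg fun i _ => sq_nonneg _
  have hB : (0:ℝ) ≤ ∑ i, (((ξ - η) i : ℝ))^2 := Finset.sum_nonneg fun i _ => sq_nonneg _
  simp only [auxQ]
  nlinarith [mul_nonneg hA hB]

/-- square of an rpow half. -/
lemma aux_rpow_half_sq {x : ℝ} (hx : 0 ≤ x) (c : ℝ) : (x ^ (c/2))^2 = x ^ c := by
  rw [← Real.rpow_natCast (x ^ (c/2)) 2, ← Real.rpow_mul hx]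
  norm_num

lemma aux_per (d : ℕ) {r s₁ s₂ S : ℝ} (h0 : 0 ≤ r) (h1 : r ≤ s₁) (h2 : s₁ ≤ s₂)
    (hSsummable : Summable fun ξ : Fin d → ℤ => auxQ d ξ ^ (r - s₂))
    (hS : S = ∑' ξ : Fin d → ℤ, auxQ d ξ ^ (r - s₂))
    (f g : (Fin d → ℤ) → ℂ) (sf : Finset (Fin d → ℤ)) (ξ : Fin d → ℤ) :
    auxQ d ξ ^ r * ‖∑ η ∈ sf, f η * g (ξ - η)‖^2 ≤
      (2^r * S) * ∑ η ∈ sf,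
        (auxQ d η ^ s₁ * ‖f η‖^2) * (auxQ d (ξ - η) ^ s₂ * ‖g (ξ - η)‖^2) := by
  set a : (Fin d → ℤ) → ℝ :=
    fun η => (auxQ d η ^ (s₁/2) * ‖f η‖) * (auxQ d (ξ - η) ^ (s₂/2) * ‖g (ξ - η)‖) with ha
  set bb : (Fin d → ℤ) → ℝ := fun η => 2^(r/2) * auxQ d (ξ - η) ^ ((r-s₂)/2) with hbb
  have hQpos := auxQ_pos d
  have hQ1 := auxQ_one_le d
  have step0 : ‖∑ η ∈ sf, f η * g (ξ - η)‖ ≤ ∑ η ∈ sf, ‖f η‖ * ‖g (ξ - η)‖ :=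
    (norm_sum_le _ _).trans (le_of_eq (Finset.sum_congr rfl fun η _ => norm_mul _ _))
  -- pointwise weighted bound
  have step1 : ∀ η : Fin d → ℤ,
      auxQ d ξ ^ (r/2) * (‖f η‖ * ‖g (ξ - η)‖) ≤ a η * bb η := by
    intro η
    have c1 : auxQ d ξ ^ (r/2) ≤ (2 * auxQ d η * auxQ d (ξ - η)) ^ (r/2) :=
      Real.rpow_le_rpow (hQpos ξ).le (auxQ_peetre d ξ η) (by linarith)
    have c2 : (2 * auxQ d η * auxQ d (ξ - η)) ^ (r/2)
        = 2^(r/2) * auxQ d η ^ (r/2) * auxQ d (ξ - η) ^ (r/2) := by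
      rw [Real.mul_rpow (mul_pos two_pos (hQpos η)).le (hQpos _).le,
        Real.mul_rpow (by norm_num : (0:ℝ) ≤ 2) (hQpos _).le]
    have c3 : auxQ d η ^ (r/2) ≤ auxQ d η ^ (s₁/2) :=
      Real.rpow_le_rpow_of_exponent_le (hQ1 η) (by linarith)
    have c4 : auxQ d (ξ - η) ^ (r/2)
        = auxQ d (ξ - η) ^ ((r-s₂)/2) * auxQ d (ξ - η) ^ (s₂/2) := by
      rw [← Real.rpow_add (hQpos _)]; ring_nf
    have c5 : auxQ d ξ ^ (r/2) ≤
        2^(r/2) * auxQ d η ^ (s₁/2) * (auxQ d (ξ - η) ^ ((r-s₂)/2) * auxQ d (ξ - η) ^ (s₂/2)) := by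
      calc auxQ d ξ ^ (r/2) ≤ 2^(r/2) * auxQ d η ^ (r/2) * auxQ d (ξ - η) ^ (r/2) :=
            c1.trans_eq c2
        _ ≤ 2^(r/2) * auxQ d η ^ (s₁/2) * auxQ d (ξ - η) ^ (r/2) := by
            have h2r : (0:ℝ) ≤ 2^(r/2) := by positivity
            have := mul_le_mul_of_nonneg_left c3 h2r
            exact mul_le_mul_of_nonneg_right this (Real.rpow_nonneg (hQpos _).le _)
        _ = 2^(r/2) * auxQ d η ^ (s₁/2) *
              (auxQ d (ξ - η) ^ ((r-s₂)/2) * auxQ d (ξ - η) ^ (s₂/2)) := by rw [← c4]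
    have hnn : (0:ℝ) ≤ ‖f η‖ * ‖g (ξ - η)‖ := by positivity
    calc auxQ d ξ ^ (r/2) * (‖f η‖ * ‖g (ξ - η)‖)
        ≤ (2^(r/2) * auxQ d η ^ (s₁/2) *
            (auxQ d (ξ - η) ^ ((r-s₂)/2) * auxQ d (ξ - η) ^ (s₂/2))) * (‖f η‖ * ‖g (ξ - η)‖) :=
          mul_le_mul_of_nonneg_right c5 hnn
      _ = a η * bb η := by rw [ha, hbb]; ring
  have step2 : auxQ d ξ ^ (r/2) * ∑ η ∈ sf, ‖f η‖ * ‖g (ξ - η)‖ ≤ ∑ η ∈ sf, a η * bb η := by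
    rw [Finset.mul_sum]
    exact Finset.sum_le_sum fun η _ => step1 η
  have step3 := Finset.sum_mul_sq_le_sq_mul_sq sf a bb
  have step4 : ∑ η ∈ sf, bb η ^ 2 ≤ 2^r * S := by
    have hbsq : ∀ η, bb η ^ 2 = 2^r * auxQ d (ξ - η) ^ (r - s₂) := by
      intro η
      rw [hbb]
      simp only
      rw [mul_pow, aux_rpow_half_sq (by norm_num : (0:ℝ) ≤ 2),
        aux_rpow_half_sq (hQpos _).le]
    rw [Finset.sum_congr rfl fun η _ => hbsq η, ← Finset.mul_sum]
    have hre : ∑ η ∈ sf, auxQ d (ξ - η) ^ (r - s₂) ≤ S := by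
      have hemb : Function.Injective (fun η : Fin d → ℤ => ξ - η) := sub_right_injective
      rw [hS]
      calc ∑ η ∈ sf, auxQ d (ξ - η) ^ (r - s₂)
          = ∑ μ ∈ sf.map ⟨fun η => ξ - η, hemb⟩, auxQ d μ ^ (r - s₂) :=
            (Finset.sum_map sf ⟨fun η => ξ - η, hemb⟩ fun μ => auxQ d μ ^ (r - s₂)).symm
        _ ≤ _ := Summable.sum_le_tsum _ (fun μ _ => Real.rpow_nonneg (hQpos _).le _) hSsummable
    have h2r : (0:ℝ) ≤ 2^r := by positivity
    exact mul_le_mul_of_nonneg_left hre h2r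
  have hasq : ∀ η, a η ^ 2 = (auxQ d η ^ s₁ * ‖f η‖^2) * (auxQ d (ξ - η) ^ s₂ * ‖g (ξ - η)‖^2) := by
    intro η
    rw [ha]
    simp only
    rw [mul_pow, mul_pow, mul_pow, aux_rpow_half_sq (hQpos _).le,
      aux_rpow_half_sq (hQpos _).le]
  have hQr : auxQ d ξ ^ r = (auxQ d ξ ^ (r/2))^2 := (aux_rpow_half_sq (hQpos ξ).le r).symm
  have hnorm_nn : (0:ℝ) ≤ ‖∑ η ∈ sf, f η * g (ξ - η)‖ := norm_nonneg _
  have hw_nn : (0:ℝ) ≤ auxQ d ξ ^ (r/2) := Real.rpow_nonneg (hQpos _).le _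
  calc auxQ d ξ ^ r * ‖∑ η ∈ sf, f η * g (ξ - η)‖^2
      = (auxQ d ξ ^ (r/2) * ‖∑ η ∈ sf, f η * g (ξ - η)‖)^2 := by rw [hQr]; ring
    _ ≤ (auxQ d ξ ^ (r/2) * ∑ η ∈ sf, ‖f η‖ * ‖g (ξ - η)‖)^2 := by
        apply pow_le_pow_left₀ (mul_nonneg hw_nn hnorm_nn)
        exact mul_le_mul_of_nonneg_left step0 hw_nn
    _ ≤ (∑ η ∈ sf, a η * bb η)^2 := by
        apply pow_le_pow_left₀
          (mul_nonneg hw_nn (Finset.sum_nonneg fun η _ => mul_nonneg (norm_nonneg _) (norm_nonneg _)))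
        exact step2
    _ ≤ (∑ η ∈ sf, a η ^ 2) * (∑ η ∈ sf, bb η ^ 2) := step3
    _ ≤ (∑ η ∈ sf, a η ^ 2) * (2^r * S) := by
        apply mul_le_mul_of_nonneg_left step4
        exact Finset.sum_nonneg fun η _ => sq_nonneg _
    _ = (2^r * S) * ∑ η ∈ sf,
          (auxQ d η ^ s₁ * ‖f η‖^2) * (auxQ d (ξ - η) ^ s₂ * ‖g (ξ - η)‖^2) := by
        rw [Finset.sum_congr rfl fun η _ => hasq η]; ring

lemma auxQ_def (d : ℕ) (ξ : Fin d → ℤ) : auxQ d ξ = 1 + ∑ i, ((ξ i : ℝ))^2 := rfl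


open Pointwise

/-- Fractional Sobolev product estimate on `𝕋^d` in Fourier-series form,
low–high case: for `0 ≤ r ≤ s₁ ≤ s₂` with `s₂ > r + d/2`,
`‖fg‖_{H^r} ≲ ‖f‖_{H^{s₁}} ‖g‖_{H^{s₂}}`, products corresponding to convolution of the
(finitely supported) Fourier coefficient sequences. -/
theorem torus_product_low_high (d : ℕ) (hd : 1 ≤ d) (r s₁ s₂ : ℝ)
    (h0 : 0 ≤ r) (h1 : r ≤ s₁) (h2 : s₁ ≤ s₂) (h3 : r + (d : ℝ) / 2 < s₂) :
    ∃ C : ℝ, 0 < C ∧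
      ∀ f g : (Fin d → ℤ) → ℂ,
        (Function.support f).Finite → (Function.support g).Finite →
        Real.sqrt (∑' ξ : Fin d → ℤ,
            (1 + ∑ i, ((ξ i : ℝ)) ^ 2) ^ r * ‖∑' η : Fin d → ℤ, f η * g (ξ - η)‖ ^ 2) ≤
          C * Real.sqrt (∑' ξ : Fin d → ℤ, (1 + ∑ i, ((ξ i : ℝ)) ^ 2) ^ s₁ * ‖f ξ‖ ^ 2)
            * Real.sqrt (∑' ξ : Fin d → ℤ, (1 + ∑ i, ((ξ i : ℝ)) ^ 2) ^ s₂ * ‖g ξ‖ ^ 2) := by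
  classical
  have hQrw : ∀ ξ : Fin d → ℤ, (1 + ∑ i, ((ξ i : ℝ)) ^ 2) = auxQ d ξ :=
    fun ξ => (auxQ_def d ξ).symm
  simp only [hQrw]
  have hQpos := auxQ_pos d
  have hQ1 := auxQ_one_le d
  have hSsummable : Summable fun ξ : Fin d → ℤ => auxQ d ξ ^ (r - s₂) := by
    have h := aux_sum_d d hd (t := s₂ - r) (by linarith)
    refine h.congr fun ξ => ?_
    rw [hQrw]
    congr 1
    ring
  set S : ℝ := ∑' ξ : Fin d → ℤ, auxQ d ξ ^ (r - s₂) with hS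
  have hS1 : (1:ℝ) ≤ S := by
    have h := Summable.le_tsum hSsummable 0 (fun j _ => Real.rpow_nonneg (hQpos _).le _)
    have h0' : auxQ d 0 = 1 := by
      rw [auxQ_def]
      simp
    rw [h0', Real.one_rpow] at h
    exact h
  have hSpos : (0:ℝ) < S := lt_of_lt_of_le one_pos hS1
  have hCpos : (0:ℝ) < 2^r * S := by positivity
  refine ⟨Real.sqrt (2^r * S), Real.sqrt_pos.mpr hCpos, ?_⟩
  intro f g hf hg
  set sf : Finset (Fin d → ℤ) := hf.toFinset with hsf
  set sg : Finset (Fin d → ℤ) := hg.toFinset with hsg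
  have hfzero : ∀ η ∉ sf, f η = 0 := by
    intro η hη
    by_contra hne
    exact hη (hf.mem_toFinset.mpr hne)
  have hgzero : ∀ μ ∉ sg, g μ = 0 := by
    intro μ hμ
    by_contra hne
    exact hμ (hg.mem_toFinset.mpr hne)
  set T : Finset (Fin d → ℤ) := sf + sg with hT
  -- inner tsum is a finite sum
  have hconv : ∀ ξ : Fin d → ℤ,
      (∑' η : Fin d → ℤ, f η * g (ξ - η)) = ∑ η ∈ sf, f η * g (ξ - η) := by
    intro ξ
    exact tsum_eq_sum fun η hη => by rw [hfzero η hη, zero_mul]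
  -- the weighted functions
  set P : (Fin d → ℤ) → ℝ := fun η => auxQ d η ^ s₁ * ‖f η‖^2 with hP
  set R : (Fin d → ℤ) → ℝ := fun μ => auxQ d μ ^ s₂ * ‖g μ‖^2 with hR
  set X : ℝ := ∑ η ∈ sf, P η with hX
  set Y : ℝ := ∑ μ ∈ sg, R μ with hY
  have hRnn : ∀ μ, 0 ≤ R μ := fun μ =>
    mul_nonneg (Real.rpow_nonneg (hQpos _).le _) (sq_nonneg _)
  have hPnn : ∀ η, 0 ≤ P η := fun η =>
    mul_nonneg (Real.rpow_nonneg (hQpos _).le _) (sq_nonneg _)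
  have hXnn : 0 ≤ X := Finset.sum_nonneg fun η _ => hPnn η
  have hYnn : 0 ≤ Y := Finset.sum_nonneg fun μ _ => hRnn μ
  -- RHS tsums are finite sums
  have hfsum : (∑' ξ : Fin d → ℤ, auxQ d ξ ^ s₁ * ‖f ξ‖^2) = X :=
    tsum_eq_sum fun ξ hξ => by rw [hfzero ξ hξ]; simp
  have hgsum : (∑' ξ : Fin d → ℤ, auxQ d ξ ^ s₂ * ‖g ξ‖^2) = Y :=
    tsum_eq_sum fun ξ hξ => by rw [hgzero ξ hξ]; simp
  -- LHS tsum is a finite sum over T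
  have houter : ∀ ξ ∉ T, auxQ d ξ ^ r * ‖∑ η ∈ sf, f η * g (ξ - η)‖^2 = 0 := by
    intro ξ hξ
    have : ∑ η ∈ sf, f η * g (ξ - η) = 0 := by
      refine Finset.sum_eq_zero fun η hη => ?_
      by_cases hgz : g (ξ - η) = 0
      · rw [hgz, mul_zero]
      · exfalso
        apply hξ
        have hμ : ξ - η ∈ sg := by
          by_contra hc
          exact hgz (hgzero _ hc)
        rw [hT]
        exact Finset.mem_add.mpr ⟨η, hη, ξ - η, hμ, by abel⟩
    rw [this]
    simp
  have hLHS : (∑' ξ : Fin d → ℤ, auxQ d ξ ^ r * ‖∑' η : Fin d → ℤ, f η * g (ξ - η)‖^2)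
      = ∑ ξ ∈ T, auxQ d ξ ^ r * ‖∑ η ∈ sf, f η * g (ξ - η)‖^2 := by
    rw [tsum_congr fun ξ => by rw [hconv ξ]]
    exact tsum_eq_sum houter
  -- main finite estimate
  have hmain : ∑ ξ ∈ T, auxQ d ξ ^ r * ‖∑ η ∈ sf, f η * g (ξ - η)‖^2
      ≤ (2^r * S) * (X * Y) := by
    have hstep : ∑ ξ ∈ T, auxQ d ξ ^ r * ‖∑ η ∈ sf, f η * g (ξ - η)‖^2
        ≤ (2^r * S) * ∑ ξ ∈ T, ∑ η ∈ sf, P η * R (ξ - η) := by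
      rw [Finset.mul_sum]
      exact Finset.sum_le_sum fun ξ _ => aux_per d h0 h1 h2 hSsummable hS f g sf ξ
    have hswap : ∑ ξ ∈ T, ∑ η ∈ sf, P η * R (ξ - η) ≤ X * Y := by
      rw [Finset.sum_comm]
      have hinner : ∀ η : Fin d → ℤ, ∑ ξ ∈ T, R (ξ - η) ≤ Y := by
        intro η
        have hemb : Function.Injective (fun ξ : Fin d → ℤ => ξ - η) :=
          fun a b hab => by
            have := congrArg (fun x => x + η) hab
            simpa using this
        have h1' : ∑ ξ ∈ T, R (ξ - η) = ∑ μ ∈ T.map ⟨fun ξ => ξ - η, hemb⟩, R μ :=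
          (Finset.sum_map T ⟨fun ξ => ξ - η, hemb⟩ R).symm
        rw [h1']
        set t : Finset (Fin d → ℤ) := T.map ⟨fun ξ => ξ - η, hemb⟩
        have h2' : ∑ μ ∈ t, R μ = ∑ μ ∈ t ∩ sg, R μ := by
          rw [← Finset.sum_inter_add_sum_sdiff t sg R]
          have : ∑ μ ∈ t \ sg, R μ = 0 :=
            Finset.sum_eq_zero fun μ hμ => by
              rw [hR]
              simp only
              rw [hgzero μ (Finset.mem_sdiff.mp hμ).2]
              simp
          rw [this, add_zero]
        rw [h2', hY]
        exact Finset.sum_le_sum_of_subset_of_nonneg (Finset.inter_subset_right)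
          fun μ _ _ => hRnn μ
      calc ∑ η ∈ sf, ∑ ξ ∈ T, P η * R (ξ - η)
          = ∑ η ∈ sf, P η * ∑ ξ ∈ T, R (ξ - η) := by
            refine Finset.sum_congr rfl fun η _ => ?_
            rw [Finset.mul_sum]
        _ ≤ ∑ η ∈ sf, P η * Y :=
            Finset.sum_le_sum fun η _ =>
              mul_le_mul_of_nonneg_left (hinner η) (hPnn η)
        _ = X * Y := by rw [← Finset.sum_mul, hX]
    calc ∑ ξ ∈ T, auxQ d ξ ^ r * ‖∑ η ∈ sf, f η * g (ξ - η)‖^2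
        ≤ (2^r * S) * ∑ ξ ∈ T, ∑ η ∈ sf, P η * R (ξ - η) := hstep
      _ ≤ (2^r * S) * (X * Y) := mul_le_mul_of_nonneg_left hswap hCpos.le
  -- conclude
  rw [hLHS, hfsum, hgsum]
  calc Real.sqrt (∑ ξ ∈ T, auxQ d ξ ^ r * ‖∑ η ∈ sf, f η * g (ξ - η)‖^2)
      ≤ Real.sqrt ((2^r * S) * (X * Y)) := Real.sqrt_le_sqrt hmain
    _ = Real.sqrt (2^r * S) * Real.sqrt X * Real.sqrt Y := by
        rw [Real.sqrt_mul hCpos.le, Real.sqrt_mul hXnn]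
        ring
end
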